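/- arXiv:1511.04314 — 3 statements merged into one kernel-verified Lean document; each statement's English description precedes it below -/
import Mathlib

section
/- Let (Q_i)_{i=1}^d be a numéraire-consistent family of probability measures. Then there exists a unique valuation measure Q̄ with respect to the basket that is equivalent to ∑_i Q_i and satisfies, for all r ∈ [0,T] and every F(T)-measurable value vector C for S(T) with C_i ∈ L¹(Q_i) for all i, the valuation formula E^{Q̄}[C̄ | F(r)] = ∑_{j ∈ A(r)} S̄_j(r)·E^{Q_j}[C_j/|A(T)| | F(r)] Q̄-almost surely. -/
open MeasureTheory Filter Set Function
open scoped ENNReal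

noncomputable section

/-- The product `x * y` of two elements of `[0,∞]` is defined unless `{x, y} = {0, ∞}`. -/
def DefinedProd (x y : ℝ≥0∞) : Prop := ¬(x = 0 ∧ y = ∞) ∧ ¬(x = ∞ ∧ y = 0)

/-- An exchange matrix: a `d × d` matrix with entries in `[0,∞]` such that `s i i = 1` and
`s i j * s j k = s i k` whenever the product is defined. -/
structure IsExchangeMatrix {d : ℕ} (s : Fin d → Fin d → ℝ≥0∞) : Prop where
  diag : ∀ i, s i i = 1
  consistent : ∀ i j k, DefinedProd (s i j) (s j k) → s i j * s j k = s i k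

/-- A value vector for an exchange matrix `s`: `s i j * v j = v i` whenever defined. -/
def IsValueVector {d : ℕ} (s : Fin d → Fin d → ℝ≥0∞) (v : Fin d → ℝ≥0∞) : Prop :=
  ∀ i j, DefinedProd (s i j) (v j) → s i j * v j = v i

open Classical in
/-- The set of active indices of an exchange matrix: those whose row sum is finite. -/
def activeFinset {d : ℕ} (s : Fin d → Fin d → ℝ≥0∞) : Finset (Fin d) :=
  Finset.univ.filter fun i => ∑ j, s i j < ∞

/-- The market model of the paper: a right-continuous filtration `F` (with `F 0` trivial) on
`[0,T]`, and a right-continuous adapted process `S` of exchange matrices with deterministic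
initial value `S0` all of whose rows are finite (no currency has devalued at time `0`). -/
structure MarketModel (d : ℕ) (Ω : Type*) [mΩ : MeasurableSpace Ω] (T : ℝ) where
  F : Filtration ℝ mΩ
  S : ℝ → Ω → Fin d → Fin d → ℝ≥0∞
  S0 : Fin d → Fin d → ℝ≥0∞
  T_pos : 0 < T
  rc_F : ∀ t ∈ Set.Ico (0 : ℝ) T, (⨅ u ∈ Set.Ioi t, F u) ≤ F t
  trivial_F0 : ∀ A : Set Ω, MeasurableSet[F 0] A → A = ∅ ∨ A = Set.univ
  adapted_S : ∀ t ∈ Set.Icc (0 : ℝ) T, ∀ i j, Measurable[F t] fun ω => S t ω i j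
  rc_S : ∀ ω i j, ∀ t ∈ Set.Ico (0 : ℝ) T,
    Tendsto (fun u => S u ω i j) (nhdsWithin t (Set.Ioi t)) (nhds (S t ω i j))
  exchange_S : ∀ t ∈ Set.Icc (0 : ℝ) T, ∀ ω, IsExchangeMatrix fun i j => S t ω i j
  init_S : ∀ ω, S 0 ω = S0
  active_S0 : ∀ i, ∑ j, S0 i j < ∞

namespace MarketModel

variable {d : ℕ} {Ω : Type*} [mΩ : MeasurableSpace Ω] {T : ℝ}

/-- Basket-quoted price of the `i`-th currency. -/
def Sbar (M : MarketModel d Ω T) (i : Fin d) (t : ℝ) (ω : Ω) : ℝ≥0∞ :=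
  (∑ j, M.S t ω i j)⁻¹

/-- The (random) set of active currencies at time `t`. -/
def active (M : MarketModel d Ω T) (t : ℝ) (ω : Ω) : Finset (Fin d) :=
  activeFinset fun i j => M.S t ω i j

/-- The payoff of a claim `C` in terms of the basket:
`C̄ = (1/|A(T)|) ∑_{j ∈ A(T)} S̄_j(T) C_j`. -/
def Cbar (M : MarketModel d Ω T) (C : Ω → Fin d → ℝ≥0∞) (ω : Ω) : ℝ≥0∞ :=
  ((M.active T ω).card : ℝ≥0∞)⁻¹ * ∑ j ∈ M.active T ω, M.Sbar j T ω * C ω j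

/-- A contingent claim: an `F(T)`-measurable value vector for `S(T)`. -/
def IsClaim (M : MarketModel d Ω T) (C : Ω → Fin d → ℝ≥0∞) : Prop :=
  (∀ i, Measurable fun ω => C ω i) ∧
  ∀ ω, IsValueVector (fun i j => M.S T ω i j) (C ω)

end MarketModel

/-- A real-valued martingale on the time interval `[0, T]`. -/
def MartingaleOn {Ω : Type*} {mΩ : MeasurableSpace Ω} (F : Filtration ℝ mΩ)
    (Q : Measure Ω) (X : ℝ → Ω → ℝ) (T : ℝ) : Prop :=
  (∀ t ∈ Set.Icc (0 : ℝ) T, StronglyMeasurable[F t] (X t) ∧ Integrable (X t) Q) ∧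
  ∀ r ∈ Set.Icc (0 : ℝ) T, ∀ t ∈ Set.Icc (0 : ℝ) T, r ≤ t → Q[X t|F r] =ᵐ[Q] X r

/-- A real-valued supermartingale on the time interval `[0, T]`. -/
def SupermartingaleOn {Ω : Type*} {mΩ : MeasurableSpace Ω} (F : Filtration ℝ mΩ)
    (Q : Measure Ω) (X : ℝ → Ω → ℝ) (T : ℝ) : Prop :=
  (∀ t ∈ Set.Icc (0 : ℝ) T, StronglyMeasurable[F t] (X t) ∧ Integrable (X t) Q) ∧
  ∀ r ∈ Set.Icc (0 : ℝ) T, ∀ t ∈ Set.Icc (0 : ℝ) T, r ≤ t → Q[X t|F r] ≤ᵐ[Q] X r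

/-- A local martingale on `[0, T]`: there is a nondecreasing sequence of stopping times
with `Q(lim_n τ_n > T) = 1` such that each stopped process is a martingale on `[0, T]`. -/
def LocalMartingaleOn {Ω : Type*} {mΩ : MeasurableSpace Ω} (F : Filtration ℝ mΩ)
    (Q : Measure Ω) (X : ℝ → Ω → ℝ) (T : ℝ) : Prop :=
  ∃ τ : ℕ → Ω → ℝ,
    (∀ n, IsStoppingTime F (fun ω => (τ n ω : WithTop ℝ))) ∧
    (∀ n ω, τ n ω ≤ τ (n + 1) ω) ∧
    (∀ᵐ ω ∂Q, ∃ n, T < τ n ω) ∧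
    ∀ n, MartingaleOn F Q (fun t ω => X (min t (τ n ω)) ω) T

/-- A numéraire-consistent family of probability measures:
`E^{Q_i}[S_{i,j}(t) 1_A] = S_{i,j}(0) Q_j(A ∩ {S_{j,i}(t) > 0})`. -/
def NumeraireConsistent {d : ℕ} {Ω : Type*} [mΩ : MeasurableSpace Ω] {T : ℝ}
    (M : MarketModel d Ω T) (Q : Fin d → Measure Ω) : Prop :=
  (∀ i, IsProbabilityMeasure (Q i)) ∧
  ∀ i j : Fin d, ∀ t ∈ Set.Icc (0 : ℝ) T, ∀ A : Set Ω, MeasurableSet[M.F t] A →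
    ∫⁻ ω in A, M.S t ω i j ∂(Q i) = M.S0 i j * Q j (A ∩ {ω | 0 < M.S t ω j i})

/-- A valuation measure with respect to the basket: the basket-quoted prices form a
`Q̄`-martingale on `[0, T]`. -/
def IsValuationMeasure {d : ℕ} {Ω : Type*} [mΩ : MeasurableSpace Ω] {T : ℝ}
    (M : MarketModel d Ω T) (Qb : Measure Ω) : Prop :=
  IsProbabilityMeasure Qb ∧
  ∀ i, MartingaleOn M.F Qb (fun t ω => (M.Sbar i t ω).toReal) T

/-- The aggregation valuation formula
`E^{Q̄}[C̄ | F(r)] = ∑_{j ∈ A(r)} S̄_j(r) E^{Q_j}[C_j / |A(T)| | F(r)]`. -/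
def AggregationFormula {d : ℕ} {Ω : Type*} [mΩ : MeasurableSpace Ω] {T : ℝ}
    (M : MarketModel d Ω T) (Qb : Measure Ω) (Q : Fin d → Measure Ω)
    (C : Ω → Fin d → ℝ≥0∞) (r : ℝ) : Prop :=
  Qb[fun ω => (M.Cbar C ω).toReal|M.F r] =ᵐ[Qb] fun ω =>
    ∑ j, Set.indicator {ω' | ∑ k, M.S r ω' j k < ∞}
      (fun ω' => (M.Sbar j r ω').toReal *
        ((Q j)[fun ω'' => (C ω'' j / ((M.active T ω'').card : ℝ≥0∞)).toReal|M.F r]) ω') ω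

/-- An `[0,∞]`-valued process jumps to zero on `[0, T]`: it is zero at some time `t ∈ [0, T]`
while its left limit at `t` is strictly positive. -/
def JumpsToZeroOn (X : ℝ → ℝ≥0∞) (T : ℝ) : Prop :=
  ∃ t ∈ Set.Icc (0 : ℝ) T, X t = 0 ∧ 0 < Function.leftLim X t

/-- A `[0,∞]`-valued stopping time. -/
def IsStoppingTimeE {Ω : Type*} {mΩ : MeasurableSpace Ω} (F : Filtration ℝ mΩ)
    (τ : Ω → ℝ≥0∞) : Prop :=
  ∀ t : ℝ, 0 ≤ t → MeasurableSet[F t] {ω | τ ω ≤ ENNReal.ofReal t}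

/-- Membership in the σ-algebra `F(τ)` for a `[0,∞]`-valued stopping time `τ`. -/
def MeasurableSetAtE {Ω : Type*} {mΩ : MeasurableSpace Ω} (F : Filtration ℝ mΩ)
    (τ : Ω → ℝ≥0∞) (A : Set Ω) : Prop :=
  MeasurableSet A ∧ ∀ t : ℝ, 0 ≤ t → MeasurableSet[F t] (A ∩ {ω | τ ω ≤ ENNReal.ofReal t})

/-- A predictable time: a stopping time announced by a nondecreasing sequence of stopping
times converging to it and strictly smaller than it on its finiteness set. -/
def IsPredictableTimeE {Ω : Type*} {mΩ : MeasurableSpace Ω} (F : Filtration ℝ mΩ)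
    (σ : Ω → ℝ≥0∞) : Prop :=
  IsStoppingTimeE F σ ∧
  ∃ a : ℕ → Ω → ℝ≥0∞,
    (∀ n, IsStoppingTimeE F (a n)) ∧
    (∀ n ω, a n ω ≤ a (n + 1) ω) ∧
    (∀ ω, (⨆ n, a n ω) = σ ω) ∧
    ∀ n ω, 0 < σ ω → σ ω < ∞ → a n ω < σ ω

/-- No Obvious Devaluations: for every currency `i` and stopping time `τ`,
`P(i ∈ A(T) | F(τ)) > 0` almost surely on `{τ < ∞} ∩ {i ∈ A(τ)}`, formulated via
`F(τ)`-measurable subsets of that event. -/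
def NOD {d : ℕ} {Ω : Type*} [mΩ : MeasurableSpace Ω] {T : ℝ}
    (M : MarketModel d Ω T) (P : Measure Ω) : Prop :=
  ∀ i : Fin d, ∀ τ : Ω → ℝ≥0∞, IsStoppingTimeE M.F τ →
    ∀ A : Set Ω, MeasurableSetAtE M.F τ A →
      (∀ ω ∈ A, τ ω < ∞ ∧ ∑ j, M.S (τ ω).toReal ω i j < ∞) →
      0 < P A → 0 < P (A ∩ {ω | ∑ j, M.S T ω i j < ∞})

/-! ### Auxiliary lemmas: pointwise exchange-matrix facts -/

section ExchangeLemmas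

variable {d : ℕ} {s : Fin d → Fin d → ℝ≥0∞}

lemma mem_activeFinset_iff {i : Fin d} : i ∈ activeFinset s ↔ ∑ j, s i j < ∞ := by
  simp [activeFinset]

lemma entry_le_rowsum (i j : Fin d) : s i j ≤ ∑ k, s i k :=
  Finset.single_le_sum (f := fun k => s i k) (fun _ _ => zero_le) (Finset.mem_univ j)

lemma one_le_rowsum (hs : IsExchangeMatrix s) (i : Fin d) : 1 ≤ ∑ k, s i k :=
  hs.diag i ▸ entry_le_rowsum i i

lemma rowsum_ne_zero (hs : IsExchangeMatrix s) (i : Fin d) : ∑ k, s i k ≠ 0 :=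
  fun h => by simpa [h] using one_le_rowsum hs i

/-- For active `i, j`, the entry `s i j` is positive and finite, with `s i j * s j i = 1`. -/
lemma active_entry (hs : IsExchangeMatrix s) {i j : Fin d}
    (hi : ∑ k, s i k < ∞) (hj : ∑ k, s j k < ∞) :
    s i j ≠ 0 ∧ s i j ≠ ∞ ∧ s i j * s j i = 1 := by
  have hij : s i j ≠ ∞ := ((entry_le_rowsum i j).trans_lt hi).ne
  have hji : s j i ≠ ∞ := ((entry_le_rowsum j i).trans_lt hj).ne
  have hdp : DefinedProd (s i j) (s j i) := by
    constructor
    · rintro ⟨-, h⟩; exact hji h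
    · rintro ⟨h, -⟩; exact hij h
  have hmul : s i j * s j i = 1 := by
    have := hs.consistent i j i hdp
    rwa [hs.diag i] at this
  refine ⟨?_, hij, hmul⟩
  intro h0
  rw [h0, zero_mul] at hmul
  exact zero_ne_one hmul

/-- For active `i, j`: row sum identity `∑ₖ s i k = s i j * ∑ₖ s j k`. -/
lemma rowsum_eq_mul (hs : IsExchangeMatrix s) {i j : Fin d}
    (hi : ∑ k, s i k < ∞) (hj : ∑ k, s j k < ∞) :
    ∑ k, s i k = s i j * ∑ k, s j k := by
  rw [Finset.mul_sum]
  refine Finset.sum_congr rfl fun k _ => ?_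
  have hij : s i j ≠ ∞ := ((entry_le_rowsum i j).trans_lt hi).ne
  have hjk : s j k ≠ ∞ := ((entry_le_rowsum j k).trans_lt hj).ne
  exact (hs.consistent i j k ⟨fun h => hjk h.2, fun h => hij h.1⟩).symm

/-- If `i` is active and `s i j ≠ 0`, then `j` is active. -/
lemma active_of_entry_ne_zero (hs : IsExchangeMatrix s) {i j : Fin d}
    (hi : ∑ k, s i k < ∞) (hij : s i j ≠ 0) :
    ∑ k, s j k < ∞ := by
  have hijt : s i j ≠ ∞ := ((entry_le_rowsum i j).trans_lt hi).ne
  have hdp : DefinedProd (s j i) (s i j) := by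
    constructor
    · rintro ⟨-, h⟩; exact hijt h
    · rintro ⟨-, h⟩; exact hij h
  have hmul : s j i * s i j = 1 := by
    have := hs.consistent j i j hdp; rwa [hs.diag j] at this
  have hji0 : s j i ≠ 0 := fun h => by simp [h] at hmul
  have hjit : s j i ≠ ∞ := by
    intro h; rw [h, ENNReal.top_mul hij] at hmul; exact (ENNReal.top_ne_one hmul)
  have : ∑ k, s j k = s j i * ∑ k, s i k := by
    rw [Finset.mul_sum]
    refine Finset.sum_congr rfl fun k _ => ?_
    have hik : s i k ≠ ∞ := ((entry_le_rowsum i k).trans_lt hi).ne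
    exact (hs.consistent j i k ⟨fun h => hik h.2, fun h => hjit h.1⟩).symm
  rw [this]
  exact ENNReal.mul_lt_top hjit.lt_top hi

/-- If `i` is active and `j` is not, then `s i j = 0`. -/
lemma entry_eq_zero_of_inactive (hs : IsExchangeMatrix s) {i j : Fin d}
    (hi : ∑ k, s i k < ∞) (hj : ¬ ∑ k, s j k < ∞) : s i j = 0 := by
  by_contra h
  exact hj (active_of_entry_ne_zero hs hi h)

/-- Inverse relation: for active `i, j`, `s j i = (s i j)⁻¹`. -/
lemma entry_inv (hs : IsExchangeMatrix s) {i j : Fin d}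
    (hi : ∑ k, s i k < ∞) (hj : ∑ k, s j k < ∞) : s j i = (s i j)⁻¹ := by
  obtain ⟨h0, ht, hmul⟩ := active_entry hs hi hj
  exact ENNReal.eq_inv_of_mul_eq_one_left (by rwa [mul_comm] at hmul)

/-- For active `i, j`: `(∑ₖ s i k)⁻¹ = s j i * (∑ₖ s j k)⁻¹`. -/
lemma inv_rowsum_eq (hs : IsExchangeMatrix s) {i j : Fin d}
    (hi : ∑ k, s i k < ∞) (hj : ∑ k, s j k < ∞) :
    (∑ k, s i k)⁻¹ = s j i * (∑ k, s j k)⁻¹ := by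
  obtain ⟨h0, ht, -⟩ := active_entry hs hi hj
  rw [rowsum_eq_mul hs hi hj, ENNReal.mul_inv (Or.inl h0) (Or.inl ht), entry_inv hs hi hj]

/-- If some index is active, the inverse row sums over active indices sum to `1`. -/
lemma sum_inv_rowsum (hs : IsExchangeMatrix s) {j : Fin d} (hj : ∑ k, s j k < ∞) :
    ∑ k ∈ activeFinset s, (∑ l, s k l)⁻¹ = 1 := by
  have key : ∀ k ∈ activeFinset s, (∑ l, s k l)⁻¹ = s j k * (∑ l, s j l)⁻¹ := by
    intro k hk
    exact inv_rowsum_eq hs (mem_activeFinset_iff.mp hk) hj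
  rw [Finset.sum_congr rfl key, ← Finset.sum_mul]
  have hsum : ∑ k ∈ activeFinset s, s j k = ∑ k, s j k := by
    refine Finset.sum_subset (Finset.subset_univ _) fun k _ hk => ?_
    exact entry_eq_zero_of_inactive hs hj (by simpa [mem_activeFinset_iff] using hk)
  rw [hsum, ENNReal.mul_inv_cancel (rowsum_ne_zero hs j) hj.ne]

/-- Value-vector identity: for active `j` and `l`, `(∑ₖ s l k)⁻¹ * v l = (∑ₖ s j k)⁻¹ * v j`. -/
lemma inv_rowsum_mul_value (hs : IsExchangeMatrix s) {v : Fin d → ℝ≥0∞}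
    (hv : IsValueVector s v) {j l : Fin d}
    (hj : ∑ k, s j k < ∞) (hl : ∑ k, s l k < ∞) :
    (∑ k, s l k)⁻¹ * v l = (∑ k, s j k)⁻¹ * v j := by
  obtain ⟨h0, ht, -⟩ := active_entry hs hl hj
  have hvl : v l = s l j * v j := by
    refine (hv l j ⟨?_, ?_⟩).symm
    · rintro ⟨h, -⟩; exact h0 h
    · rintro ⟨h, -⟩; exact ht h
  rw [hvl, inv_rowsum_eq hs hl hj, entry_inv hs hl hj]
  rw [mul_comm ((s l j)⁻¹) _, mul_assoc, ← mul_assoc ((s l j)⁻¹), ENNReal.inv_mul_cancel h0 ht,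
    one_mul]

end ExchangeLemmas
/-! ### Market-model level auxiliary definitions and lemmas -/

namespace MarketModel

variable {d : ℕ} {Ω : Type*} [mΩ : MeasurableSpace Ω] {T : ℝ}

/-- Initial basket-quoted price (deterministic weight). -/
def w (M : MarketModel d Ω T) (j : Fin d) : ℝ≥0∞ := (∑ k, M.S0 j k)⁻¹

/-- Number of active currencies, as an extended nonnegative real. -/
def cardA (M : MarketModel d Ω T) (t : ℝ) (ω : Ω) : ℝ≥0∞ := ((M.active t ω).card : ℝ≥0∞)

variable {M : MarketModel d Ω T}

lemma hT_mem (M : MarketModel d Ω T) : T ∈ Set.Icc (0 : ℝ) T := ⟨M.T_pos.le, le_refl T⟩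

lemma h0_mem (M : MarketModel d Ω T) : (0 : ℝ) ∈ Set.Icc (0 : ℝ) T := ⟨le_refl 0, M.T_pos.le⟩

lemma exch (ht : t ∈ Set.Icc (0 : ℝ) T) (ω : Ω) :
    IsExchangeMatrix fun i j => M.S t ω i j := M.exchange_S t ht ω

lemma S0_exchange (hΩ : Nonempty Ω) : IsExchangeMatrix M.S0 := by
  obtain ⟨ω⟩ := hΩ
  have := M.exchange_S 0 (h0_mem M) ω
  rwa [M.init_S ω] at this

lemma mem_active_iff {t : ℝ} {ω : Ω} {i : Fin d} :
    i ∈ M.active t ω ↔ ∑ k, M.S t ω i k < ∞ := by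
  simp [active, activeFinset]

lemma Sbar_le_one (ht : t ∈ Set.Icc (0 : ℝ) T) (i : Fin d) (ω : Ω) :
    M.Sbar i t ω ≤ 1 :=
  ENNReal.inv_le_one.mpr (one_le_rowsum (exch ht ω) i)

lemma Sbar_ne_top (ht : t ∈ Set.Icc (0 : ℝ) T) (i : Fin d) (ω : Ω) :
    M.Sbar i t ω ≠ ∞ :=
  ((Sbar_le_one ht i ω).trans_lt ENNReal.one_lt_top).ne

lemma cardA_ne_top {t : ℝ} {ω : Ω} : M.cardA t ω ≠ ∞ := ENNReal.natCast_ne_top _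

lemma cardA_ne_zero {t : ℝ} {ω : Ω} {j : Fin d} (hj : j ∈ M.active t ω) :
    M.cardA t ω ≠ 0 := by
  simp only [cardA, ne_eq, Nat.cast_eq_zero, Finset.card_eq_zero]
  exact fun h => by simp [h] at hj

lemma cardA_eq_sum_indicator (t : ℝ) (ω : Ω) :
    M.cardA t ω
      = ∑ i, Set.indicator {ω' | ∑ k, M.S t ω' i k < ∞} (fun _ => (1 : ℝ≥0∞)) ω := by
  simp only [cardA, active, activeFinset, Finset.card_filter, Nat.cast_sum,
    Set.indicator_apply, Set.mem_setOf_eq]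
  exact Finset.sum_congr rfl fun i _ => by split <;> simp

/-- `Cbar` written as a sum over all indices with indicators. -/
lemma Cbar_eq_indicator (C : Ω → Fin d → ℝ≥0∞) (ω : Ω) :
    M.Cbar C ω = (M.cardA T ω)⁻¹ *
      ∑ j, Set.indicator {ω' | ∑ k, M.S T ω' j k < ∞}
        (fun ω' => M.Sbar j T ω' * C ω' j) ω := by
  simp only [Cbar, cardA]
  congr 1
  rw [active, activeFinset, Finset.sum_filter]
  refine Finset.sum_congr rfl fun j _ => ?_
  by_cases h : ∑ k, M.S T ω j k < ∞
  · rw [if_pos h, Set.indicator_of_mem (show ω ∈ {ω' | ∑ k, M.S T ω' j k < ∞} from h)]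
  · rw [if_neg h, Set.indicator_of_notMem (show ω ∉ {ω' | ∑ k, M.S T ω' j k < ∞} from h)]

/-- On the event that `j` is active at `T`, `C̄ = S̄ⱼ(T) Cⱼ` for a value vector `C`. -/
lemma Cbar_eq_of_active {C : Ω → Fin d → ℝ≥0∞} {ω : Ω}
    (hC : IsValueVector (fun i j => M.S T ω i j) (C ω)) {j : Fin d}
    (hj : ∑ k, M.S T ω j k < ∞) :
    M.Cbar C ω = M.Sbar j T ω * C ω j := by
  have hjA : j ∈ M.active T ω := mem_active_iff.mpr hj
  have hs := exch (M := M) (hT_mem M) ω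
  have hterm : ∀ l ∈ M.active T ω,
      M.Sbar l T ω * C ω l = M.Sbar j T ω * C ω j := fun l hl =>
    inv_rowsum_mul_value hs hC hj (mem_active_iff.mp hl)
  rw [Cbar, Finset.sum_congr rfl hterm, Finset.sum_const, nsmul_eq_mul, ← mul_assoc,
    ← cardA, ENNReal.inv_mul_cancel (cardA_ne_zero hjA) cardA_ne_top, one_mul]

/-- On the event that `j` is active at `T`, `C̄ ⋅ (row sum)ⱼ = Cⱼ`. -/
lemma Cbar_mul_rowsum {C : Ω → Fin d → ℝ≥0∞} {ω : Ω}
    (hC : IsValueVector (fun i j => M.S T ω i j) (C ω)) {j : Fin d}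
    (hj : ∑ k, M.S T ω j k < ∞) :
    M.Cbar C ω * ∑ k, M.S T ω j k = C ω j := by
  rw [Cbar_eq_of_active hC hj, Sbar, mul_comm ((∑ k, M.S T ω j k)⁻¹) (C ω j), mul_assoc,
    ENNReal.inv_mul_cancel (rowsum_ne_zero (exch (M := M) (hT_mem M) ω) j) hj.ne, mul_one]

/-! #### Measurability -/

lemma meas_S (ht : t ∈ Set.Icc (0 : ℝ) T) (i j : Fin d) :
    Measurable[M.F t] fun ω => M.S t ω i j := M.adapted_S t ht i j

lemma meas_rowsum (ht : t ∈ Set.Icc (0 : ℝ) T) (i : Fin d) :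
    Measurable[M.F t] fun ω => ∑ k, M.S t ω i k :=
  Finset.measurable_sum _ fun k _ => meas_S ht i k

lemma measSet_active (ht : t ∈ Set.Icc (0 : ℝ) T) (i : Fin d) :
    MeasurableSet[M.F t] {ω | ∑ k, M.S t ω i k < ∞} :=
  measurableSet_lt (meas_rowsum ht i) measurable_const

lemma measSet_pos (ht : t ∈ Set.Icc (0 : ℝ) T) (i j : Fin d) :
    MeasurableSet[M.F t] {ω | 0 < M.S t ω i j} :=
  measurableSet_lt measurable_const (meas_S ht i j)

lemma meas_Sbar (ht : t ∈ Set.Icc (0 : ℝ) T) (i : Fin d) :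
    Measurable[M.F t] (M.Sbar i t) := (meas_rowsum ht i).inv

lemma meas_cardA (ht : t ∈ Set.Icc (0 : ℝ) T) :
    Measurable[M.F t] (M.cardA t) := by
  have : M.cardA t = fun ω =>
      ∑ i, Set.indicator {ω' | ∑ k, M.S t ω' i k < ∞} (fun _ => (1 : ℝ≥0∞)) ω :=
    funext fun ω => cardA_eq_sum_indicator t ω
  rw [this]
  exact Finset.measurable_sum _ fun i _ =>
    (measurable_const.indicator (measSet_active ht i))

lemma meas_Cbar {C : Ω → Fin d → ℝ≥0∞} (hC : ∀ i, Measurable fun ω => C ω i) :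
    Measurable (M.Cbar C) := by
  have hle : M.F T ≤ mΩ := M.F.le T
  have : M.Cbar C = fun ω => (M.cardA T ω)⁻¹ *
      ∑ j, Set.indicator {ω' | ∑ k, M.S T ω' j k < ∞}
        (fun ω' => M.Sbar j T ω' * C ω' j) ω :=
    funext fun ω => Cbar_eq_indicator C ω
  rw [this]
  exact ((meas_cardA (hT_mem M)).mono hle le_rfl).inv.mul <|
    Finset.measurable_sum _ fun j _ =>
      (((meas_Sbar (hT_mem M) j).mono hle le_rfl).mul (hC j)).indicator
        (hle _ (measSet_active (hT_mem M) j))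

end MarketModel
/-! ### The aggregate measure and transfer lemmas -/

namespace MarketModel

variable {d : ℕ} {Ω : Type*} [mΩ : MeasurableSpace Ω] {T : ℝ}
variable {M : MarketModel d Ω T} {Q : Fin d → Measure Ω}

/-- Indicator of the event that currency `i` is active at time `t`. -/
def indA (M : MarketModel d Ω T) (t : ℝ) (i : Fin d) (ω : Ω) : ℝ≥0∞ :=
  Set.indicator {ω' | ∑ k, M.S t ω' i k < ∞} (fun _ => (1 : ℝ≥0∞)) ω

/-- The candidate valuation measure. -/
def aggregate (M : MarketModel d Ω T) (Q : Fin d → Measure Ω) : Measure Ω :=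
  ∑ j, M.w j • ((Q j).withDensity fun ω => (∑ k, M.S T ω j k) * (M.cardA T ω)⁻¹)

lemma meas_indA (ht : t ∈ Set.Icc (0 : ℝ) T) (i : Fin d) :
    Measurable[M.F t] (M.indA t i) :=
  Measurable.indicator (m := M.F t) measurable_const (measSet_active ht i)

lemma indA_of_active {t : ℝ} {i : Fin d} {ω : Ω} (h : ∑ k, M.S t ω i k < ∞) :
    M.indA t i ω = 1 :=
  Set.indicator_of_mem (show ω ∈ {ω' | ∑ k, M.S t ω' i k < ∞} from h) _

lemma indA_of_inactive {t : ℝ} {i : Fin d} {ω : Ω} (h : ¬ ∑ k, M.S t ω i k < ∞) :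
    M.indA t i ω = 0 :=
  Set.indicator_of_notMem (show ω ∉ {ω' | ∑ k, M.S t ω' i k < ∞} from h) _

lemma cardA_eq_sum_indA (t : ℝ) (ω : Ω) : M.cardA t ω = ∑ i, M.indA t i ω :=
  cardA_eq_sum_indicator t ω

lemma one_le_cardA {t : ℝ} {ω : Ω} {j : Fin d} (hj : ∑ k, M.S t ω j k < ∞) :
    1 ≤ M.cardA t ω := by
  rw [cardA]
  exact_mod_cast Nat.one_le_cast.mpr
    (Finset.card_pos.mpr ⟨j, mem_active_iff.mpr hj⟩)

lemma sum_indA_mul_Sbar (ht : t ∈ Set.Icc (0 : ℝ) T) {ω : Ω} {j : Fin d}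
    (hj : ∑ k, M.S t ω j k < ∞) :
    ∑ k, M.indA t k ω * M.Sbar k t ω = 1 := by
  have hs := exch (M := M) ht ω
  have : ∀ k ∈ Finset.univ, M.indA t k ω * M.Sbar k t ω
      = if k ∈ activeFinset (fun i j' => M.S t ω i j') then (∑ l, M.S t ω k l)⁻¹ else 0 := by
    intro k _
    by_cases h : ∑ l, M.S t ω k l < ∞
    · rw [indA_of_active h, one_mul, if_pos (mem_activeFinset_iff.mpr h)]; rfl
    · rw [indA_of_inactive h, zero_mul, if_neg (fun hh => h (mem_activeFinset_iff.mp hh))]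
  rw [Finset.sum_congr rfl this, ← Finset.sum_filter, Finset.filter_mem_eq_inter,
    Finset.univ_inter]
  exact sum_inv_rowsum hs hj

/-- Weight identity: `w l * S0 l k = w k`. -/
lemma w_mul_S0 (hΩ : Nonempty Ω) (M : MarketModel d Ω T) (l k : Fin d) :
    M.w l * M.S0 l k = M.w k := by
  have hs0 := S0_exchange (M := M) hΩ
  obtain ⟨h0, ht, -⟩ := active_entry hs0 (M.active_S0 l) (M.active_S0 k)
  rw [w, w, rowsum_eq_mul hs0 (M.active_S0 l) (M.active_S0 k),
    ENNReal.mul_inv (Or.inl h0) (Or.inl ht), mul_comm ((M.S0 l k)⁻¹) _, mul_assoc,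
    ENNReal.inv_mul_cancel h0 ht, mul_one]

lemma sum_w (hd : 0 < d) (hΩ : Nonempty Ω) (M : MarketModel d Ω T) : ∑ k, M.w k = 1 := by
  have hs0 := S0_exchange (M := M) hΩ
  have h := sum_inv_rowsum hs0 (j := ⟨0, hd⟩) (M.active_S0 _)
  rwa [activeFinset, Finset.filter_true_of_mem (fun i _ => M.active_S0 i)] at h

lemma nonempty_of_nc (hd : 0 < d) (hQ : NumeraireConsistent M Q) : Nonempty Ω := by
  by_contra h
  rw [not_nonempty_iff] at h
  have h1 : (Q ⟨0, hd⟩) Set.univ = 1 := (hQ.1 ⟨0, hd⟩).measure_univ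
  rw [Set.univ_eq_empty_iff.mpr h, measure_empty] at h1
  exact zero_ne_one h1

/-- Extended numéraire consistency: indicators upgraded to `F t`-measurable weights. -/
lemma consistencyExt (hQ : NumeraireConsistent M Q) (i j : Fin d)
    (ht : t ∈ Set.Icc (0 : ℝ) T) {G : Ω → ℝ≥0∞} (hG : Measurable[M.F t] G) :
    ∫⁻ ω, G ω * M.S t ω i j ∂(Q i)
      = M.S0 i j * ∫⁻ ω in {ω' | 0 < M.S t ω' j i}, G ω ∂(Q j) := by
  have hm : M.F t ≤ mΩ := M.F.le t
  set μ := (Q i).withDensity (fun ω => M.S t ω i j) with hμ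
  set ν := M.S0 i j • (Q j).restrict {ω' | 0 < M.S t ω' j i} with hν
  have hagree : ∀ A, MeasurableSet[M.F t] A → μ A = ν A := by
    intro A hA
    rw [hμ, withDensity_apply _ (hm A hA), hν, Measure.smul_apply, smul_eq_mul,
      Measure.restrict_apply (hm A hA)]
    exact hQ.2 i j t ht A hA
  have htrim : μ.trim hm = ν.trim hm := by
    refine @Measure.ext Ω (M.F t) _ _ fun A hA => ?_
    rw [trim_measurableSet_eq hm hA, trim_measurableSet_eq hm hA, hagree A hA]
  have hGm : Measurable G := hG.mono hm le_rfl
  calc ∫⁻ ω, G ω * M.S t ω i j ∂(Q i)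
      = ∫⁻ ω, ((fun ω' => M.S t ω' i j) * G) ω ∂(Q i) := by
        exact lintegral_congr fun ω => by simp [mul_comm]
    _ = ∫⁻ ω, G ω ∂μ :=
        (lintegral_withDensity_eq_lintegral_mul (Q i)
          ((meas_S ht i j).mono hm le_rfl) hGm).symm
    _ = ∫⁻ ω, G ω ∂(μ.trim hm) := (lintegral_trim hm hG).symm
    _ = ∫⁻ ω, G ω ∂(ν.trim hm) := by rw [htrim]
    _ = ∫⁻ ω, G ω ∂ν := lintegral_trim hm hG
    _ = M.S0 i j * ∫⁻ ω in {ω' | 0 < M.S t ω' j i}, G ω ∂(Q j) := by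
        rw [hν, lintegral_smul_measure, smul_eq_mul]

/-- Almost surely under `Q j`, currency `j` is active at time `t`. -/
lemma activeAE (hQ : NumeraireConsistent M Q) (j : Fin d) (ht : t ∈ Set.Icc (0 : ℝ) T) :
    ∀ᵐ ω ∂(Q j), ∑ k, M.S t ω j k < ∞ := by
  haveI := fun k => hQ.1 k
  have hmeas : ∀ k, Measurable fun ω => M.S t ω j k :=
    fun k => (meas_S ht j k).mono (M.F.le t) le_rfl
  have hfin : ∫⁻ ω, ∑ k, M.S t ω j k ∂(Q j) < ∞ := by
    rw [lintegral_finset_sum _ (fun k _ => hmeas k)]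
    refine ENNReal.sum_lt_top.mpr fun k _ => ?_
    have h := hQ.2 j k t ht Set.univ MeasurableSet.univ
    rw [Measure.restrict_univ] at h
    rw [h]
    exact ENNReal.mul_lt_top ((entry_le_rowsum j k).trans_lt (M.active_S0 j))
      (lt_of_le_of_lt prob_le_one ENNReal.one_lt_top)
  exact ae_lt_top (Finset.measurable_sum _ fun k _ => hmeas k) hfin.ne

/-- Almost surely under `Q k`, positivity of `S t ω k l` is equivalent to `l` active. -/
lemma posIffActiveAE (hQ : NumeraireConsistent M Q) (k l : Fin d)
    (ht : t ∈ Set.Icc (0 : ℝ) T) :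
    ∀ᵐ ω ∂(Q k), (0 < M.S t ω k l ↔ ∑ m, M.S t ω l m < ∞) := by
  filter_upwards [activeAE hQ k ht] with ω hω
  have hs := exch (M := M) ht ω
  constructor
  · intro h
    exact active_of_entry_ne_zero hs hω h.ne'
  · intro h
    obtain ⟨h0, -, -⟩ := active_entry hs hω h
    exact pos_iff_ne_zero.mpr h0

/-- The aggregate measure agrees with `∑ k, w k • Q k` on `F T`-measurable integrands. -/
lemma lintegral_aggregate (hd : 0 < d) (hQ : NumeraireConsistent M Q) {φ : Ω → ℝ≥0∞}
    (hφ : Measurable[M.F T] φ) :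
    ∫⁻ ω, φ ω ∂(aggregate M Q) = ∑ k, M.w k * ∫⁻ ω, φ ω ∂(Q k) := by
  have hΩ : Nonempty Ω := nonempty_of_nc hd hQ
  have hm : M.F T ≤ mΩ := M.F.le T
  have hφm : Measurable φ := hφ.mono hm le_rfl
  have hcard : Measurable (M.cardA T) := (meas_cardA (hT_mem M)).mono hm le_rfl
  have hG : Measurable[M.F T] fun ω => (M.cardA T ω)⁻¹ * φ ω :=
    (meas_cardA (hT_mem M)).inv.mul hφ
  have hGm : Measurable fun ω => (M.cardA T ω)⁻¹ * φ ω := hG.mono hm le_rfl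
  have hSm : ∀ l k, Measurable fun ω => M.S T ω l k :=
    fun l k => (meas_S (hT_mem M) l k).mono hm le_rfl
  calc ∫⁻ ω, φ ω ∂(aggregate M Q)
      = ∑ l, M.w l * ∫⁻ ω, φ ω ∂((Q l).withDensity
          fun ω => (∑ k, M.S T ω l k) * (M.cardA T ω)⁻¹) := by
        rw [aggregate, lintegral_finset_sum_measure]
        exact Finset.sum_congr rfl fun l _ => lintegral_smul_measure _ _
    _ = ∑ l, M.w l * ∑ k, ∫⁻ ω, ((M.cardA T ω)⁻¹ * φ ω) * M.S T ω l k ∂(Q l) := by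
        refine Finset.sum_congr rfl fun l _ => ?_
        congr 1
        rw [lintegral_withDensity_eq_lintegral_mul (Q l)
          (f := fun ω => (∑ k, M.S T ω l k) * (M.cardA T ω)⁻¹)
          (((Finset.measurable_sum _ fun k _ => hSm l k)).mul hcard.inv) hφm,
          ← lintegral_finset_sum _ (f := fun k ω => (M.cardA T ω)⁻¹ * φ ω * M.S T ω l k) (fun k _ => (hGm.mul (hSm l k)))]
        exact lintegral_congr fun ω => by
          simp only [Pi.mul_apply]
          rw [Finset.sum_mul, Finset.sum_mul]
          exact Finset.sum_congr rfl fun k _ => by ring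
    _ = ∑ l, M.w l * ∑ k, M.S0 l k *
          ∫⁻ ω, M.indA T l ω * ((M.cardA T ω)⁻¹ * φ ω) ∂(Q k) := by
        refine Finset.sum_congr rfl fun l _ => ?_
        congr 1
        refine Finset.sum_congr rfl fun k _ => ?_
        rw [consistencyExt hQ l k (hT_mem M) hG]
        congr 1
        rw [← lintegral_indicator (hm _ (measSet_pos (hT_mem M) k l)) _]
        refine lintegral_congr_ae ?_
        filter_upwards [posIffActiveAE hQ k l (hT_mem M)] with ω hiff
        by_cases hpos : 0 < M.S T ω k l
        · rw [Set.indicator_of_mem (show ω ∈ {ω' | 0 < M.S T ω' k l} from hpos), indA_of_active (hiff.mp hpos), one_mul]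
        · rw [Set.indicator_of_notMem (show ω ∉ {ω' | 0 < M.S T ω' k l} from hpos), indA_of_inactive (fun hh => hpos (hiff.mpr hh)),
            zero_mul]
    _ = ∑ k, M.w k * ∫⁻ ω, (∑ l, M.indA T l ω) * ((M.cardA T ω)⁻¹ * φ ω) ∂(Q k) := by
        simp_rw [Finset.mul_sum]
        rw [Finset.sum_comm]
        refine Finset.sum_congr rfl fun k _ => ?_
        calc ∑ l, M.w l * (M.S0 l k *
              ∫⁻ ω, M.indA T l ω * ((M.cardA T ω)⁻¹ * φ ω) ∂(Q k))
            = ∑ l, M.w k * ∫⁻ ω, M.indA T l ω * ((M.cardA T ω)⁻¹ * φ ω) ∂(Q k) :=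
              Finset.sum_congr rfl fun l _ => by rw [← mul_assoc, w_mul_S0 hΩ M l k]
          _ = M.w k * ∑ l, ∫⁻ ω, M.indA T l ω * ((M.cardA T ω)⁻¹ * φ ω) ∂(Q k) := by
              rw [Finset.mul_sum]
          _ = M.w k * ∫⁻ ω, (∑ l, M.indA T l ω) * ((M.cardA T ω)⁻¹ * φ ω) ∂(Q k) := by
              rw [← lintegral_finset_sum _ (f := fun l ω => M.indA T l ω * ((M.cardA T ω)⁻¹ * φ ω)) (fun l _ =>
                (((meas_indA (hT_mem M) l).mono hm le_rfl).mul hGm))]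
              congr 1
              exact lintegral_congr fun ω => (Finset.sum_mul _ _ _).symm
    _ = ∑ k, M.w k * ∫⁻ ω, φ ω ∂(Q k) := by
        refine Finset.sum_congr rfl fun k _ => ?_
        congr 1
        refine lintegral_congr_ae ?_
        filter_upwards [activeAE hQ k (hT_mem M)] with ω hω
        rw [← cardA_eq_sum_indA, ← mul_assoc,
          ENNReal.mul_inv_cancel (cardA_ne_zero (mem_active_iff.mpr hω)) cardA_ne_top,
          one_mul]

end MarketModel
namespace MarketModel

variable {d : ℕ} {Ω : Type*} [mΩ : MeasurableSpace Ω] {T : ℝ}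
variable {M : MarketModel d Ω T} {Q : Fin d → Measure Ω}

lemma aggregate_isProb (hd : 0 < d) (hQ : NumeraireConsistent M Q) :
    IsProbabilityMeasure (aggregate M Q) := by
  constructor
  rw [← lintegral_one, lintegral_aggregate hd hQ (@measurable_const ℝ≥0∞ Ω _ (M.F T) 1)]
  have : ∀ k ∈ Finset.univ, M.w k * ∫⁻ _, (1 : ℝ≥0∞) ∂(Q k) = M.w k := by
    intro k _
    haveI := hQ.1 k
    rw [lintegral_one, measure_univ, mul_one]
  rw [Finset.sum_congr rfl this]
  exact sum_w hd (nonempty_of_nc hd hQ) M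

/-- The key transfer identity at time `r`. -/
lemma transfer (hd : 0 < d) (hQ : NumeraireConsistent M Q) {r : ℝ}
    (hr : r ∈ Set.Icc (0 : ℝ) T) (j : Fin d) {φ : Ω → ℝ≥0∞}
    (hφ : Measurable[M.F r] φ) :
    ∫⁻ ω, M.indA r j ω * M.Sbar j r ω * φ ω ∂(aggregate M Q)
      = M.w j * ∫⁻ ω, φ ω ∂(Q j) := by
  have hΩ : Nonempty Ω := nonempty_of_nc hd hQ
  have hrT : M.F r ≤ M.F T := M.F.mono hr.2
  have hm : M.F r ≤ mΩ := M.F.le r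
  have hφm : Measurable φ := hφ.mono hm le_rfl
  have hψ : Measurable[M.F T] fun ω => M.indA r j ω * M.Sbar j r ω * φ ω :=
    (((meas_indA hr j).mul (meas_Sbar hr j)).mul hφ).mono hrT le_rfl
  have hG : ∀ k, Measurable[M.F r] fun ω => M.Sbar k r ω * φ ω :=
    fun k => (meas_Sbar hr k).mul hφ
  rw [lintegral_aggregate hd hQ hψ]
  have hterm : ∀ k ∈ Finset.univ,
      M.w k * ∫⁻ ω, M.indA r j ω * M.Sbar j r ω * φ ω ∂(Q k)
        = M.w j * ∫⁻ ω, M.indA r k ω * (M.Sbar k r ω * φ ω) ∂(Q j) := by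
    intro k _
    have hstep1 : ∫⁻ ω, M.indA r j ω * M.Sbar j r ω * φ ω ∂(Q k)
        = ∫⁻ ω, (M.Sbar k r ω * φ ω) * M.S r ω k j ∂(Q k) := by
      refine lintegral_congr_ae ?_
      filter_upwards [activeAE hQ k hr] with ω hk
      have hs := exch (M := M) hr ω
      by_cases hj : ∑ m, M.S r ω j m < ∞
      · rw [indA_of_active hj, Sbar, Sbar, inv_rowsum_eq hs hj hk]
        ring
      · rw [indA_of_inactive hj, entry_eq_zero_of_inactive hs hk hj]
        ring
    have hstep2 : ∫⁻ ω, (M.Sbar k r ω * φ ω) * M.S r ω k j ∂(Q k)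
        = M.S0 k j * ∫⁻ ω, M.indA r k ω * (M.Sbar k r ω * φ ω) ∂(Q j) := by
      rw [consistencyExt hQ k j hr (hG k)]
      congr 1
      rw [← lintegral_indicator (hm _ (measSet_pos hr j k)) _]
      refine lintegral_congr_ae ?_
      filter_upwards [posIffActiveAE hQ j k hr] with ω hiff
      by_cases hpos : 0 < M.S r ω j k
      · rw [Set.indicator_of_mem (show ω ∈ {ω' | 0 < M.S r ω' j k} from hpos),
          indA_of_active (hiff.mp hpos), one_mul]
      · rw [Set.indicator_of_notMem (show ω ∉ {ω' | 0 < M.S r ω' j k} from hpos),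
          indA_of_inactive (fun hh => hpos (hiff.mpr hh)), zero_mul]
    rw [hstep1, hstep2, ← mul_assoc, w_mul_S0 hΩ M k j]
  rw [Finset.sum_congr rfl hterm, ← Finset.mul_sum]
  congr 1
  rw [← lintegral_finset_sum _ (f := fun k ω => M.indA r k ω * (M.Sbar k r ω * φ ω)) (fun k _ =>
    (((meas_indA hr k).mul (hG k)).mono hm le_rfl))]
  refine lintegral_congr_ae ?_
  filter_upwards [activeAE hQ j hr] with ω hj
  rw [show ∑ k, M.indA r k ω * (M.Sbar k r ω * φ ω)
      = (∑ k, M.indA r k ω * M.Sbar k r ω) * φ ω by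
    rw [Finset.sum_mul]; exact Finset.sum_congr rfl fun k _ => (mul_assoc _ _ _).symm,
    sum_indA_mul_Sbar hr hj, one_mul]

/-- Integrating a claim against the aggregate measure. -/
lemma lintegral_mul_Cbar (hQ : NumeraireConsistent M Q) {C : Ω → Fin d → ℝ≥0∞}
    (hC : M.IsClaim C) {W : Ω → ℝ≥0∞} (hW : Measurable W) :
    ∫⁻ ω, W ω * M.Cbar C ω ∂(aggregate M Q)
      = ∑ j, M.w j * ∫⁻ ω, W ω * (C ω j * (M.cardA T ω)⁻¹) ∂(Q j) := by
  have hm : M.F T ≤ mΩ := M.F.le T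
  rw [aggregate, lintegral_finset_sum_measure]
  refine Finset.sum_congr rfl fun j _ => ?_
  rw [lintegral_smul_measure]
  congr 1
  rw [lintegral_withDensity_eq_lintegral_mul (Q j)
    (f := fun ω => (∑ k, M.S T ω j k) * (M.cardA T ω)⁻¹) (g := fun ω => W ω * M.Cbar C ω)
    ((Finset.measurable_sum _ fun k _ => (meas_S (hT_mem M) j k).mono hm le_rfl).mul
      ((meas_cardA (hT_mem M)).mono hm le_rfl).inv)
    (hW.mul (meas_Cbar hC.1))]
  refine lintegral_congr_ae ?_
  filter_upwards [activeAE hQ j (hT_mem M)] with ω hj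
  simp only [Pi.mul_apply]
  rw [show (∑ k, M.S T ω j k) * (M.cardA T ω)⁻¹ * (W ω * M.Cbar C ω)
      = W ω * ((M.Cbar C ω * ∑ k, M.S T ω j k) * (M.cardA T ω)⁻¹) by ring,
    Cbar_mul_rowsum (hC.2 ω) hj]

/-- Finiteness of the conditional-claim integrand. -/
lemma lintegral_claim_card_lt_top (hQ : NumeraireConsistent M Q) {C : Ω → Fin d → ℝ≥0∞}
    (j : Fin d) (hint : ∫⁻ ω, C ω j ∂(Q j) < ∞) :
    ∫⁻ ω, C ω j * (M.cardA T ω)⁻¹ ∂(Q j) < ∞ := by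
  refine lt_of_le_of_lt ?_ hint
  refine lintegral_mono_ae ?_
  filter_upwards [activeAE hQ j (hT_mem M)] with ω hj
  calc C ω j * (M.cardA T ω)⁻¹ ≤ C ω j * 1 :=
        mul_le_mul_right (ENNReal.inv_le_one.mpr (one_le_cardA hj)) _
    _ = C ω j := mul_one _

end MarketModel
namespace MarketModel

variable {d : ℕ} {Ω : Type*} [mΩ : MeasurableSpace Ω] {T : ℝ}
variable {M : MarketModel d Ω T} {Q : Fin d → Measure Ω}

lemma indA_mul_Sbar (t : ℝ) (i : Fin d) (ω : Ω) :
    M.indA t i ω * M.Sbar i t ω = M.Sbar i t ω := by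
  by_cases h : ∑ k, M.S t ω i k < ∞
  · rw [indA_of_active h, one_mul]
  · have h' : ∑ k, M.S t ω i k = ∞ := top_le_iff.mp (not_lt.mp h)
    rw [indA_of_inactive h, zero_mul, Sbar, h', ENNReal.inv_top]

lemma Sbar_toReal_le_one (ht : t ∈ Set.Icc (0 : ℝ) T) (i : Fin d) (ω : Ω) :
    ‖(M.Sbar i t ω).toReal‖ ≤ (1 : ℝ) := by
  rw [Real.norm_eq_abs, abs_of_nonneg ENNReal.toReal_nonneg]
  exact ENNReal.toReal_le_of_le_ofReal zero_le_one (by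
    simpa [ENNReal.ofReal_one] using Sbar_le_one ht i ω)

lemma integrable_Sbar (ht : t ∈ Set.Icc (0 : ℝ) T) (i : Fin d) {P : Measure Ω}
    [IsFiniteMeasure P] : Integrable (fun ω => (M.Sbar i t ω).toReal) P := by
  refine Integrable.mono' (integrable_const (1 : ℝ)) ?_ ?_
  · exact (ENNReal.measurable_toReal.comp
      ((meas_Sbar ht i).mono (M.F.le t) le_rfl)).aestronglyMeasurable
  · exact Filter.Eventually.of_forall fun ω => Sbar_toReal_le_one ht i ω

/-- Set-integral of the basket-quoted price against the aggregate measure. -/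
lemma setLintegral_Sbar_aggregate (hd : 0 < d) (hQ : NumeraireConsistent M Q)
    {r t : ℝ} (hr : r ∈ Set.Icc (0 : ℝ) T) (ht : t ∈ Set.Icc (0 : ℝ) T) (hrt : r ≤ t)
    (i : Fin d) {s : Set Ω} (hs : MeasurableSet[M.F r] s) :
    ∫⁻ ω in s, M.Sbar i t ω ∂(aggregate M Q) = M.w i * Q i s := by
  have hsT : MeasurableSet[M.F t] s := M.F.mono hrt _ hs
  have hsm : MeasurableSet s := M.F.le t _ hsT
  have heq : ∀ ω, s.indicator (M.Sbar i t) ω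
      = M.indA t i ω * M.Sbar i t ω * s.indicator (fun _ => (1 : ℝ≥0∞)) ω := by
    intro ω
    by_cases h : ω ∈ s
    · rw [Set.indicator_of_mem h, Set.indicator_of_mem h, indA_mul_Sbar, mul_one]
    · rw [Set.indicator_of_notMem h, Set.indicator_of_notMem h, mul_zero]
  rw [← lintegral_indicator hsm _, lintegral_congr heq,
    transfer hd hQ ht i (Measurable.indicator
      (@measurable_const ℝ≥0∞ Ω _ (M.F t) 1) hsT)]
  have h1 : ∫⁻ ω, s.indicator (fun _ => (1 : ℝ≥0∞)) ω ∂(Q i) = Q i s := by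
    exact lintegral_indicator_one (μ := Q i) hsm
  rw [h1]

lemma aggregate_valuation (hd : 0 < d) (hQ : NumeraireConsistent M Q) :
    IsValuationMeasure M (aggregate M Q) := by
  have hP := aggregate_isProb hd hQ
  haveI := hP
  refine ⟨hP, fun i => ⟨fun t ht => ?_, fun r hr t ht hrt => ?_⟩⟩
  · exact ⟨(ENNReal.measurable_toReal.comp (meas_Sbar ht i)).stronglyMeasurable,
      integrable_Sbar ht i⟩
  · have hm : M.F r ≤ mΩ := M.F.le r
    haveI : SigmaFinite ((aggregate M Q).trim hm) := inferInstance
    refine (ae_eq_condExp_of_forall_setIntegral_eq hm (integrable_Sbar ht i)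
      (fun s _ _ => (integrable_Sbar hr i).integrableOn) (fun s hsm hfin => ?_) ?_).symm
    · have key : ∀ u, u ∈ Set.Icc (0 : ℝ) T → r ≤ u →
          ∫ ω in s, (M.Sbar i u ω).toReal ∂(aggregate M Q) = (M.w i * Q i s).toReal := by
        intro u hu hru
        rw [integral_toReal (((meas_Sbar hu i).mono (M.F.le u) le_rfl).aemeasurable)
          (Filter.Eventually.of_forall fun ω =>
            (Sbar_le_one hu i ω).trans_lt ENNReal.one_lt_top),
          setLintegral_Sbar_aggregate hd hQ hr hu hru i hsm]
      rw [key r hr le_rfl, key t ht hrt]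
    · exact StronglyMeasurable.aestronglyMeasurable
        ((ENNReal.measurable_toReal.comp (meas_Sbar hr i)).stronglyMeasurable)

lemma w_ne_zero (i : Fin d) : M.w i ≠ 0 :=
  ENNReal.inv_ne_zero.mpr (M.active_S0 i).ne

lemma aggregate_equiv (hd : 0 < d) (hQ : NumeraireConsistent M Q) :
    aggregate M Q ≪ (∑ i, Q i) ∧ (∑ i, Q i) ≪ aggregate M Q := by
  have hm : M.F T ≤ mΩ := M.F.le T
  have hden : ∀ j, Measurable fun ω => (∑ k, M.S T ω j k) * (M.cardA T ω)⁻¹ :=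
    fun j => ((Finset.measurable_sum _ fun k _ => (meas_S (hT_mem M) j k).mono hm le_rfl).mul
      ((meas_cardA (hT_mem M)).mono hm le_rfl).inv)
  constructor
  · refine Measure.AbsolutelyContinuous.mk fun s hsm hs0 => ?_
    rw [Measure.finset_sum_apply] at hs0
    have hz : ∀ j, Q j s = 0 := by
      intro j
      have := Finset.sum_eq_zero_iff.mp hs0 j (Finset.mem_univ j)
      exact this
    rw [aggregate, Measure.finset_sum_apply]
    refine Finset.sum_eq_zero fun j _ => ?_
    rw [Measure.smul_apply, smul_eq_mul, withDensity_apply _ hsm,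
      setLIntegral_measure_zero s _ (hz j), mul_zero]
  · refine Measure.AbsolutelyContinuous.mk fun s hsm hs0 => ?_
    rw [aggregate, Measure.finset_sum_apply] at hs0
    rw [Measure.finset_sum_apply]
    refine Finset.sum_eq_zero fun j _ => ?_
    have hterm := Finset.sum_eq_zero_iff.mp hs0 j (Finset.mem_univ j)
    rw [Measure.smul_apply, smul_eq_mul, withDensity_apply _ hsm] at hterm
    have hint : ∫⁻ ω in s, (∑ k, M.S T ω j k) * (M.cardA T ω)⁻¹ ∂(Q j) = 0 :=
      by
        rcases mul_eq_zero.mp hterm with h | h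
        · exact absurd h (w_ne_zero j)
        · exact h
    have hlow : ∀ ω, ((d : ℝ≥0∞))⁻¹ ≤ (∑ k, M.S T ω j k) * (M.cardA T ω)⁻¹ := by
      intro ω
      calc ((d : ℝ≥0∞))⁻¹ = 1 * ((d : ℝ≥0∞))⁻¹ := (one_mul _).symm
        _ ≤ (∑ k, M.S T ω j k) * (M.cardA T ω)⁻¹ := by
            refine mul_le_mul' (one_le_rowsum (exch (M := M) (hT_mem M) ω) j) ?_
            refine ENNReal.inv_le_inv.mpr ?_
            rw [cardA]
            exact_mod_cast Nat.cast_le.mpr (le_trans (Finset.card_filter_le _ _)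
              (le_of_eq (Finset.card_univ.trans (Fintype.card_fin d))))
    have hle : ((d : ℝ≥0∞))⁻¹ * Q j s ≤ 0 := by
      calc ((d : ℝ≥0∞))⁻¹ * Q j s = ∫⁻ _ in s, ((d : ℝ≥0∞))⁻¹ ∂(Q j) :=
            (setLIntegral_const s _).symm
        _ ≤ ∫⁻ ω in s, (∑ k, M.S T ω j k) * (M.cardA T ω)⁻¹ ∂(Q j) :=
            lintegral_mono fun ω => hlow ω
        _ = 0 := hint
    have hd0 : ((d : ℝ≥0∞))⁻¹ ≠ 0 := ENNReal.inv_ne_zero.mpr (ENNReal.natCast_ne_top d)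
    rcases mul_eq_zero.mp (le_antisymm hle zero_le) with h | h
    · exact absurd h hd0
    · exact h

end MarketModel
namespace MarketModel

variable {d : ℕ} {Ω : Type*} [mΩ : MeasurableSpace Ω] {T : ℝ}
variable {M : MarketModel d Ω T} {Q : Fin d → Measure Ω}

lemma w_le_one (hΩ : Nonempty Ω) (M : MarketModel d Ω T) (j : Fin d) : M.w j ≤ 1 :=
  ENNReal.inv_le_one.mpr (one_le_rowsum (S0_exchange hΩ) j)

lemma lintegral_Cbar_lt_top (hd : 0 < d) (hQ : NumeraireConsistent M Q)
    {C : Ω → Fin d → ℝ≥0∞} (hC : M.IsClaim C)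
    (hCint : ∀ i, ∫⁻ ω, C ω i ∂(Q i) < ∞) {s : Set Ω} (hs : MeasurableSet s) :
    ∫⁻ ω in s, M.Cbar C ω ∂(aggregate M Q)
      = ∑ j, M.w j * ∫⁻ ω in s, C ω j * (M.cardA T ω)⁻¹ ∂(Q j) ∧
    ∫⁻ ω in s, M.Cbar C ω ∂(aggregate M Q) < ∞ := by
  have hΩ : Nonempty Ω := nonempty_of_nc hd hQ
  have hW : Measurable (s.indicator (fun _ => (1 : ℝ≥0∞))) :=
    measurable_const.indicator hs
  have hpull : ∀ (v : Ω → ℝ≥0∞) (ω : Ω),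
      s.indicator v ω = s.indicator (fun _ => (1 : ℝ≥0∞)) ω * v ω := by
    intro v ω
    by_cases h : ω ∈ s
    · rw [Set.indicator_of_mem h, Set.indicator_of_mem h, one_mul]
    · rw [Set.indicator_of_notMem h, Set.indicator_of_notMem h, zero_mul]
  have heq : ∫⁻ ω in s, M.Cbar C ω ∂(aggregate M Q)
      = ∑ j, M.w j * ∫⁻ ω in s, C ω j * (M.cardA T ω)⁻¹ ∂(Q j) := by
    rw [← lintegral_indicator hs _, lintegral_congr (hpull (M.Cbar C)),
      lintegral_mul_Cbar hQ hC hW]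
    refine Finset.sum_congr rfl fun j _ => ?_
    congr 1
    rw [← lintegral_indicator hs _]
    exact lintegral_congr fun ω => (hpull (fun ω' => C ω' j * (M.cardA T ω')⁻¹) ω).symm
  refine ⟨heq, ?_⟩
  rw [heq]
  refine ENNReal.sum_lt_top.mpr fun j _ => ENNReal.mul_lt_top
    (lt_of_le_of_lt (w_le_one hΩ M j) ENNReal.one_lt_top) ?_
  exact lt_of_le_of_lt (setLIntegral_le_lintegral _ _)
    (lintegral_claim_card_lt_top hQ j (hCint j))

end MarketModel
namespace MarketModel

variable {d : ℕ} {Ω : Type*} [mΩ : MeasurableSpace Ω] {T : ℝ}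
variable {M : MarketModel d Ω T} {Q : Fin d → Measure Ω}

lemma indA_le_one (t : ℝ) (i : Fin d) (ω : Ω) : M.indA t i ω ≤ 1 := by
  by_cases h : ∑ k, M.S t ω i k < ∞
  · rw [indA_of_active h]
  · rw [indA_of_inactive h]; exact zero_le_one

lemma aggregate_formula (hd : 0 < d) (hQ : NumeraireConsistent M Q) {r : ℝ}
    (hr : r ∈ Set.Icc (0 : ℝ) T) {C : Ω → Fin d → ℝ≥0∞} (hC : M.IsClaim C)
    (hCint : ∀ i, ∫⁻ ω, C ω i ∂(Q i) < ∞) :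
    AggregationFormula M (aggregate M Q) Q C r := by
  have hΩ : Nonempty Ω := nonempty_of_nc hd hQ
  haveI hPp : IsProbabilityMeasure (aggregate M Q) := aggregate_isProb hd hQ
  have hm : M.F r ≤ mΩ := M.F.le r
  haveI : ∀ j, SigmaFinite ((Q j).trim hm) := fun j => by
    haveI := hQ.1 j; infer_instance
  have hCm := hC.1
  have hcardm : Measurable (M.cardA T) := (meas_cardA (hT_mem M)).mono (M.F.le T) le_rfl
  have hdiv_meas : ∀ j, Measurable fun ω => C ω j / M.cardA T ω := fun j =>
    (hCm j).div hcardm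
  have hdiv_int : ∀ j, ∫⁻ ω, C ω j / M.cardA T ω ∂(Q j) < ∞ := by
    intro j
    simp_rw [div_eq_mul_inv]
    exact lintegral_claim_card_lt_top hQ j (hCint j)
  have hint_h : ∀ j, Integrable (fun ω => (C ω j / M.cardA T ω).toReal) (Q j) :=
    fun j => integrable_toReal_of_lintegral_ne_top (hdiv_meas j).aemeasurable (hdiv_int j).ne
  set g : Fin d → Ω → ℝ :=
    fun j => (Q j)[fun ω => (C ω j / M.cardA T ω).toReal|M.F r] with hg_def
  have hgsm : ∀ j, StronglyMeasurable[M.F r] (g j) := fun j => stronglyMeasurable_condExp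
  have hgm : ∀ j, Measurable[M.F r] (g j) := fun j => (hgsm j).measurable
  have hgm' : ∀ j, Measurable (g j) := fun j => (hgm j).mono hm le_rfl
  have hg_nonneg : ∀ j, 0 ≤ᵐ[Q j] g j := fun j =>
    condExp_nonneg (Filter.Eventually.of_forall fun ω => ENNReal.toReal_nonneg)
  have hgint : ∀ j, Integrable (g j) (Q j) := fun j => by
    haveI := hQ.1 j; exact integrable_condExp
  set u : Fin d → Ω → ℝ≥0∞ :=
    fun j ω => M.indA r j ω * M.Sbar j r ω * ENNReal.ofReal (g j ω) with hu_def
  have hu_meas_r : ∀ j, Measurable[M.F r] (u j) := fun j =>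
    ((meas_indA hr j).mul (meas_Sbar hr j)).mul (ENNReal.measurable_ofReal.comp (hgm j))
  have hu_meas : ∀ j, Measurable (u j) := fun j => (hu_meas_r j).mono hm le_rfl
  have hu_fin : ∀ j ω, u j ω < ∞ := by
    intro j ω
    simp only [hu_def]
    exact ENNReal.mul_lt_top
      (ENNReal.mul_lt_top ((indA_le_one r j ω).trans_lt ENNReal.one_lt_top)
        ((Sbar_le_one hr j ω).trans_lt ENNReal.one_lt_top)) ENNReal.ofReal_lt_top
  set td : Fin d → Ω → ℝ := fun j => Set.indicator {ω' | ∑ k, M.S r ω' j k < ∞}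
    (fun ω' => (M.Sbar j r ω').toReal * g j ω') with htd_def
  -- a.e. identification of the real-valued term with the toReal of the ℝ≥0∞ lift
  have hterm_ae : ∀ j, td j =ᵐ[aggregate M Q] fun ω => (u j ω).toReal := by
    intro j
    have hNnull : Q j {ω | g j ω < 0} = 0 := by
      simpa [not_le] using ae_iff.mp (hg_nonneg j)
    have hNm : MeasurableSet[M.F r] {ω | g j ω < 0} :=
      measurableSet_lt (hgm j) (@measurable_const ℝ Ω _ (M.F r) 0)
    have hzero : ∫⁻ ω, M.indA r j ω * M.Sbar j r ω *
        ({ω' | g j ω' < 0}.indicator (fun _ => (1 : ℝ≥0∞)) ω) ∂(aggregate M Q) = 0 := by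
      rw [transfer hd hQ hr j (Measurable.indicator
        (@measurable_const ℝ≥0∞ Ω _ (M.F r) 1) hNm)]
      have h1 : ∫⁻ ω, ({ω' | g j ω' < 0}.indicator (fun _ => (1 : ℝ≥0∞)) ω) ∂(Q j)
          = Q j {ω' | g j ω' < 0} := by
        exact lintegral_indicator_one (μ := Q j) (hm _ hNm)
      rw [h1, hNnull, mul_zero]
    have hae0 : (fun ω => M.indA r j ω * M.Sbar j r ω *
        ({ω' | g j ω' < 0}.indicator (fun _ => (1 : ℝ≥0∞)) ω)) =ᵐ[aggregate M Q] 0 :=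
      (lintegral_eq_zero_iff (((((meas_indA hr j).mul (meas_Sbar hr j)).mul
        (measurable_const.indicator hNm)).mono hm le_rfl))).mp hzero
    filter_upwards [hae0] with ω hω
    simp only [htd_def, hu_def]
    by_cases hact : ∑ k, M.S r ω j k < ∞
    · rw [Set.indicator_of_mem (show ω ∈ {ω' | ∑ k, M.S r ω' j k < ∞} from hact),
        indA_of_active hact, one_mul]
      by_cases hg0 : 0 ≤ g j ω
      · rw [ENNReal.toReal_mul, ENNReal.toReal_ofReal hg0]
      · have hωN : ω ∈ {ω' | g j ω' < 0} := not_le.mp hg0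
        rw [indA_of_active hact, one_mul, Set.indicator_of_mem hωN, mul_one] at hω
        rw [hω]
        simp
    · rw [Set.indicator_of_notMem (show ω ∉ {ω' | ∑ k, M.S r ω' j k < ∞} from hact),
        indA_of_inactive hact, zero_mul, zero_mul, ENNReal.toReal_zero]
  -- set-lintegral of the lift
  have hu_lint : ∀ j {s : Set Ω}, MeasurableSet[M.F r] s →
      ∫⁻ ω in s, u j ω ∂(aggregate M Q)
        = M.w j * ∫⁻ ω in s, ENNReal.ofReal (g j ω) ∂(Q j) := by
    intro j s hs
    have hsm : MeasurableSet s := hm _ hs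
    rw [← lintegral_indicator hsm, ← lintegral_indicator hsm]
    have hpt : ∀ ω, s.indicator (u j) ω = M.indA r j ω * M.Sbar j r ω *
        s.indicator (fun ω' => ENNReal.ofReal (g j ω')) ω := by
      intro ω
      by_cases hω : ω ∈ s
      · rw [Set.indicator_of_mem hω, Set.indicator_of_mem hω]
      · rw [Set.indicator_of_notMem hω, Set.indicator_of_notMem hω, mul_zero]
    rw [lintegral_congr hpt]
    exact transfer hd hQ hr j ((ENNReal.measurable_ofReal.comp (hgm j)).indicator hs)
  have hu_glob : ∀ j, ∫⁻ ω, u j ω ∂(aggregate M Q) < ∞ := by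
    intro j
    have h1 := hu_lint j (MeasurableSet.univ (α := Ω))
    rw [Measure.restrict_univ, Measure.restrict_univ] at h1
    rw [h1]
    refine ENNReal.mul_lt_top (lt_of_le_of_lt (w_le_one hΩ M j) ENNReal.one_lt_top) ?_
    calc ∫⁻ ω, ENNReal.ofReal (g j ω) ∂(Q j)
        ≤ ∫⁻ ω, (‖g j ω‖₊ : ℝ≥0∞) ∂(Q j) :=
          lintegral_mono fun ω => Real.ofReal_le_enorm _
      _ < ∞ := (hgint j).hasFiniteIntegral
  have hterm_int : ∀ j, Integrable (td j) (aggregate M Q) := fun j =>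
    (integrable_toReal_of_lintegral_ne_top (hu_meas j).aemeasurable
      (hu_glob j).ne).congr (hterm_ae j).symm
  -- the key set-integral identity for each term
  have hKEY : ∀ j, ∀ {s : Set Ω}, MeasurableSet[M.F r] s →
      ∫ ω in s, td j ω ∂(aggregate M Q)
        = (M.w j * ∫⁻ ω in s, C ω j / M.cardA T ω ∂(Q j)).toReal := by
    intro j s hs
    haveI := hQ.1 j
    calc ∫ ω in s, td j ω ∂(aggregate M Q)
        = ∫ ω in s, (u j ω).toReal ∂(aggregate M Q) :=
          integral_congr_ae (ae_restrict_of_ae (hterm_ae j))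
      _ = (∫⁻ ω in s, u j ω ∂(aggregate M Q)).toReal :=
          integral_toReal ((hu_meas j).aemeasurable.restrict)
            (ae_restrict_of_ae (Filter.Eventually.of_forall (hu_fin j)))
      _ = (M.w j * ∫⁻ ω in s, ENNReal.ofReal (g j ω) ∂(Q j)).toReal := by
          rw [hu_lint j hs]
      _ = (M.w j * ∫⁻ ω in s, C ω j / M.cardA T ω ∂(Q j)).toReal := by
          congr 2
          calc ∫⁻ ω in s, ENNReal.ofReal (g j ω) ∂(Q j)
              = ENNReal.ofReal (∫ ω in s, g j ω ∂(Q j)) :=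
                (ofReal_integral_eq_lintegral_ofReal (hgint j).integrableOn
                  (ae_restrict_of_ae (hg_nonneg j))).symm
            _ = ENNReal.ofReal (∫ ω in s, (C ω j / M.cardA T ω).toReal ∂(Q j)) := by
                simp only [hg_def]
                rw [setIntegral_condExp hm (hint_h j) hs]
            _ = ∫⁻ ω in s, ENNReal.ofReal ((C ω j / M.cardA T ω).toReal) ∂(Q j) :=
                ofReal_integral_eq_lintegral_ofReal (hint_h j).integrableOn
                  (ae_restrict_of_ae
                    (Filter.Eventually.of_forall fun ω => ENNReal.toReal_nonneg))
            _ = ∫⁻ ω in s, C ω j / M.cardA T ω ∂(Q j) := by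
                refine lintegral_congr_ae (ae_restrict_of_ae ?_)
                filter_upwards [ae_lt_top (hdiv_meas j) (hdiv_int j).ne] with ω hω
                exact ENNReal.ofReal_toReal hω.ne
  -- global integrability of C̄
  have hCbar_fin : ∫⁻ ω, M.Cbar C ω ∂(aggregate M Q) < ∞ := by
    have h2 := (lintegral_Cbar_lt_top hd hQ hC hCint MeasurableSet.univ).2
    rwa [Measure.restrict_univ] at h2
  have hf_int : Integrable (fun ω => (M.Cbar C ω).toReal) (aggregate M Q) :=
    integrable_toReal_of_lintegral_ne_top (meas_Cbar hCm).aemeasurable hCbar_fin.ne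
  -- conclude via the characterisation of the conditional expectation
  refine (ae_eq_condExp_of_forall_setIntegral_eq hm hf_int
      (fun s hs _ => (integrable_finset_sum _ fun j _ => hterm_int j).integrableOn)
      (fun s hs _ => ?_) ?_).symm
  · have hsm := hm _ hs
    have hterm_fin : ∀ j, M.w j * ∫⁻ ω in s, C ω j * (M.cardA T ω)⁻¹ ∂(Q j) ≠ ∞ := by
      intro j
      refine (ENNReal.mul_lt_top (lt_of_le_of_lt (w_le_one hΩ M j) ENNReal.one_lt_top)
        (lt_of_le_of_lt (setLIntegral_le_lintegral _ _)
          (lintegral_claim_card_lt_top hQ j (hCint j)))).ne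
    have hRHS : ∫ ω in s, (M.Cbar C ω).toReal ∂(aggregate M Q)
        = (∑ j, M.w j * ∫⁻ ω in s, C ω j * (M.cardA T ω)⁻¹ ∂(Q j)).toReal := by
      rw [integral_toReal ((meas_Cbar hCm).aemeasurable.restrict)
        (ae_restrict_of_ae (ae_lt_top (meas_Cbar hCm) hCbar_fin.ne)),
        (lintegral_Cbar_lt_top hd hQ hC hCint hsm).1]
    rw [hRHS, ENNReal.toReal_sum (fun j _ => hterm_fin j),
      integral_finset_sum _ (fun j _ => (hterm_int j).integrableOn)]
    refine Finset.sum_congr rfl fun j _ => ?_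
    rw [hKEY j hs]
    have hdm : ∫⁻ ω in s, C ω j / M.cardA T ω ∂(Q j)
        = ∫⁻ ω in s, C ω j * (M.cardA T ω)⁻¹ ∂(Q j) :=
      lintegral_congr fun ω => by rw [div_eq_mul_inv]
    rw [hdm]
  · refine StronglyMeasurable.aestronglyMeasurable (Measurable.stronglyMeasurable ?_)
    refine Finset.measurable_sum _ fun j _ => ?_
    exact ((ENNReal.measurable_toReal.comp (meas_Sbar hr j)).mul (hgm j)).indicator
      (measSet_active hr j)

end MarketModel
namespace MarketModel

variable {d : ℕ} {Ω : Type*} [mΩ : MeasurableSpace Ω] {T : ℝ}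
variable {M : MarketModel d Ω T} {Q : Fin d → Measure Ω}

/-- An `F 0`-measurable real function is constant. -/
lemma F0_constant {f : Ω → ℝ} (hf : Measurable[M.F 0] f) (ω ω' : Ω) : f ω = f ω' := by
  by_contra hne
  have hs : MeasurableSet[M.F 0] (f ⁻¹' {f ω}) := hf (measurableSet_singleton _)
  rcases M.trivial_F0 _ hs with h | h
  · have hmem : ω ∈ f ⁻¹' {f ω} := rfl
    rw [h] at hmem
    exact hmem
  · have hmem : ω' ∈ f ⁻¹' {f ω} := h ▸ Set.mem_univ ω'
    exact hne ((Set.mem_preimage.mp hmem).symm)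

lemma inv_mul_self_le (a : ℝ≥0∞) : a⁻¹ * a ≤ 1 := by
  rcases eq_or_ne a 0 with h | h0
  · simp [h]
  rcases eq_or_ne a ∞ with h | ht
  · simp [h]
  · rw [ENNReal.inv_mul_cancel h0 ht]

/-- The basic uniqueness claims. -/
lemma uniq_claim (hB : MeasurableSet B) (i : Fin d) :
    M.IsClaim (fun ω j => B.indicator (fun _ => (1 : ℝ≥0∞)) ω * M.S T ω j i) := by
  constructor
  · intro j
    exact (measurable_const.indicator hB).mul ((meas_S (hT_mem M) j i).mono (M.F.le T) le_rfl)
  · intro ω a b hdp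
    have hdp' : DefinedProd (M.S T ω a b)
        (B.indicator (fun _ => (1 : ℝ≥0∞)) ω * M.S T ω b i) := hdp
    show M.S T ω a b * (B.indicator (fun _ => (1 : ℝ≥0∞)) ω * M.S T ω b i)
        = B.indicator (fun _ => (1 : ℝ≥0∞)) ω * M.S T ω a i
    by_cases hω : ω ∈ B
    · rw [Set.indicator_of_mem hω, one_mul] at hdp' ⊢
      rw [one_mul]
      exact (exch (M := M) (hT_mem M) ω).consistent a b i hdp'
    · rw [Set.indicator_of_notMem hω, zero_mul, mul_zero, zero_mul]

lemma uniq_claim_int (hQ : NumeraireConsistent M Q) (hB : MeasurableSet B) (i j : Fin d) :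
    ∫⁻ ω, B.indicator (fun _ => (1 : ℝ≥0∞)) ω * M.S T ω j i ∂(Q j) < ∞ := by
  haveI := hQ.1 i
  have hle : ∀ ω, B.indicator (fun _ => (1 : ℝ≥0∞)) ω * M.S T ω j i ≤ M.S T ω j i := by
    intro ω
    by_cases hω : ω ∈ B
    · rw [Set.indicator_of_mem hω, one_mul]
    · rw [Set.indicator_of_notMem hω, zero_mul]; exact zero_le
  refine lt_of_le_of_lt (lintegral_mono hle) ?_
  have h := hQ.2 j i T (hT_mem M) Set.univ MeasurableSet.univ
  rw [Measure.restrict_univ] at h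
  rw [h]
  exact ENNReal.mul_lt_top ((entry_le_rowsum j i).trans_lt (M.active_S0 j))
    (lt_of_le_of_lt prob_le_one ENNReal.one_lt_top)

/-- The density associated with currency `i`. -/
lemma uniq_claim_Cbar (hB : MeasurableSet B) (i : Fin d) (ω : Ω) :
    M.Cbar (fun ω' j => B.indicator (fun _ => (1 : ℝ≥0∞)) ω' * M.S T ω' j i) ω
      = B.indicator (fun _ => (1 : ℝ≥0∞)) ω * M.Cbar (fun ω' j => M.S T ω' j i) ω := by
  by_cases hω : ω ∈ B
  · simp only [Cbar, Set.indicator_of_mem hω, one_mul]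
  · simp only [Cbar, Set.indicator_of_notMem hω, zero_mul, mul_zero,
      Finset.sum_const_zero, zero_mul]

lemma D_le_one (i : Fin d) (ω : Ω) : M.Cbar (fun ω' j => M.S T ω' j i) ω ≤ 1 := by
  rw [Cbar]
  calc (M.cardA T ω)⁻¹ * ∑ j ∈ M.active T ω, M.Sbar j T ω * M.S T ω j i
      ≤ (M.cardA T ω)⁻¹ * ∑ _j ∈ M.active T ω, 1 := by
        refine mul_le_mul_right (Finset.sum_le_sum fun j _ => ?_) _
        calc M.Sbar j T ω * M.S T ω j i ≤ M.Sbar j T ω * ∑ k, M.S T ω j k :=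
              mul_le_mul_right (entry_le_rowsum j i) _
          _ ≤ 1 := inv_mul_self_le _
    _ ≤ 1 := by
        rw [Finset.sum_const, nsmul_eq_mul, mul_one]
        exact inv_mul_self_le _
  -- note: `cardA` is definitionally the card coercion

lemma D_pos {i : Fin d} {ω : Ω} (hi : ∑ k, M.S T ω i k < ∞) :
    0 < M.Cbar (fun ω' j => M.S T ω' j i) ω := by
  have hiA : i ∈ M.active T ω := mem_active_iff.mpr hi
  have hterm : 0 < M.Sbar i T ω * M.S T ω i i := by
    rw [(exch (M := M) (hT_mem M) ω).diag i, mul_one, Sbar]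
    exact ENNReal.inv_pos.mpr hi.ne
  have hsum : 0 < ∑ j ∈ M.active T ω, M.Sbar j T ω * M.S T ω j i :=
    lt_of_lt_of_le hterm (Finset.single_le_sum (f := fun j => M.Sbar j T ω * M.S T ω j i) (fun j _ => zero_le) hiA)
  rw [Cbar]
  exact ENNReal.mul_pos (ENNReal.inv_ne_zero.mpr cardA_ne_top) hsum.ne'

lemma D_meas (i : Fin d) : Measurable (M.Cbar (fun ω' j => M.S T ω' j i)) :=
  meas_Cbar fun j => (meas_S (hT_mem M) j i).mono (M.F.le T) le_rfl

/-- The aggregation formula at time `0` determines the `P`-integral of bounded basket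
payoffs. -/
lemma formula_determines (hd : 0 < d) (hQ : NumeraireConsistent M Q) {P : Measure Ω}
    (hPP : IsProbabilityMeasure P) {C : Ω → Fin d → ℝ≥0∞}
    (hform : AggregationFormula M P Q C 0) (hC : M.IsClaim C)
    (hCint : ∀ i, ∫⁻ ω, C ω i ∂(Q i) < ∞) (hbdd : ∀ ω, M.Cbar C ω ≤ 1) :
    ∫⁻ ω, M.Cbar C ω ∂P = ∑ j, M.w j * ∫⁻ ω, C ω j / M.cardA T ω ∂(Q j) := by
  have hΩ : Nonempty Ω := nonempty_of_nc hd hQ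
  have hm0 : M.F 0 ≤ mΩ := M.F.le 0
  haveI : SigmaFinite (P.trim hm0) := by haveI := hPP; infer_instance
  haveI : ∀ j, SigmaFinite ((Q j).trim hm0) := fun j => by
    haveI := hQ.1 j; infer_instance
  have hCm := hC.1
  have hcardm : Measurable (M.cardA T) := (meas_cardA (hT_mem M)).mono (M.F.le T) le_rfl
  have hdiv_meas : ∀ j, Measurable fun ω => C ω j / M.cardA T ω := fun j =>
    (hCm j).div hcardm
  have hdiv_int : ∀ j, ∫⁻ ω, C ω j / M.cardA T ω ∂(Q j) < ∞ := by
    intro j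
    simp_rw [div_eq_mul_inv]
    exact lintegral_claim_card_lt_top hQ j (hCint j)
  have hint_h : ∀ j, Integrable (fun ω => (C ω j / M.cardA T ω).toReal) (Q j) :=
    fun j => integrable_toReal_of_lintegral_ne_top (hdiv_meas j).aemeasurable (hdiv_int j).ne
  set g : Fin d → Ω → ℝ :=
    fun j => (Q j)[fun ω => (C ω j / M.cardA T ω).toReal|M.F 0] with hg_def
  have hf_int : Integrable (fun ω => (M.Cbar C ω).toReal) P := by
    refine Integrable.mono' (integrable_const (1 : ℝ))
      (ENNReal.measurable_toReal.comp (meas_Cbar hCm)).aestronglyMeasurable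
      (Filter.Eventually.of_forall fun ω => ?_)
    rw [Real.norm_eq_abs, abs_of_nonneg ENNReal.toReal_nonneg]
    exact ENNReal.toReal_le_of_le_ofReal zero_le_one (by
      simpa [ENNReal.ofReal_one] using hbdd ω)
  -- rewrite the right-hand side of the formula at time `0`
  have hrow0 : ∀ (ω : Ω) (j : Fin d), (∑ k, M.S 0 ω j k) = ∑ k, M.S0 j k := by
    intro ω j
    rw [M.init_S ω]
  have hform' : P[fun ω => (M.Cbar C ω).toReal|M.F 0] =ᵐ[P]
      fun _ω => ∑ j, (M.w j).toReal * g j _ω := by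
    refine hform.trans (Filter.Eventually.of_forall fun ω => ?_)
    refine Finset.sum_congr rfl fun j _ => ?_
    have hmem : ω ∈ {ω' | ∑ k, M.S 0 ω' j k < ∞} := by
      show ∑ k, M.S 0 ω j k < ∞
      rw [hrow0 ω j]
      exact M.active_S0 j
    rw [Set.indicator_of_mem hmem]
    congr 1
    rw [Sbar, hrow0 ω j]
    rfl
  -- both sides are constant functions
  obtain ⟨ω₀, hω₀⟩ : ∃ ω, (P[fun ω' => (M.Cbar C ω').toReal|M.F 0]) ω
      = ∑ j, (M.w j).toReal * g j ω := by
    haveI : (MeasureTheory.ae P).NeBot := ae_neBot.mpr (IsProbabilityMeasure.ne_zero P)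
    exact hform'.exists
  have hLconst : ∀ ω, (P[fun ω' => (M.Cbar C ω').toReal|M.F 0]) ω
      = (P[fun ω' => (M.Cbar C ω').toReal|M.F 0]) ω₀ :=
    fun ω => F0_constant stronglyMeasurable_condExp.measurable ω ω₀
  have hgconst : ∀ j ω, g j ω = g j ω₀ :=
    fun j ω => F0_constant stronglyMeasurable_condExp.measurable ω ω₀
  -- integrate both constants
  have hL : ∫ ω, (M.Cbar C ω).toReal ∂P
      = (P[fun ω' => (M.Cbar C ω').toReal|M.F 0]) ω₀ := by
    rw [← integral_condExp hm0 (f := fun ω' => (M.Cbar C ω').toReal) (μ := P)]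
    rw [show (fun ω => (P[fun ω' => (M.Cbar C ω').toReal|M.F 0]) ω)
        = fun _ => (P[fun ω' => (M.Cbar C ω').toReal|M.F 0]) ω₀ from funext hLconst]
    haveI := hPP
    simp [integral_const]
  have hgj : ∀ j, g j ω₀ = ∫ ω, (C ω j / M.cardA T ω).toReal ∂(Q j) := by
    intro j
    haveI := hQ.1 j
    have h1 : ∫ ω', g j ω' ∂(Q j) = ∫ ω', (C ω' j / M.cardA T ω').toReal ∂(Q j) := by
      simp only [hg_def]
      exact integral_condExp hm0
    rw [← h1, show (fun ω' => g j ω') = fun _ => g j ω₀ from funext fun ω' => hgconst j ω']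
    simp [integral_const]
  -- combine
  have hmain : ∫ ω, (M.Cbar C ω).toReal ∂P
      = ∑ j, (M.w j).toReal * ∫ ω, (C ω j / M.cardA T ω).toReal ∂(Q j) := by
    rw [hL, hω₀]
    exact Finset.sum_congr rfl fun j _ => by rw [hgj j]
  -- convert to lintegrals
  have hCbarP_fin : ∫⁻ ω, M.Cbar C ω ∂P ≠ ∞ := by
    refine (lt_of_le_of_lt (lintegral_mono hbdd) ?_).ne
    haveI := hPP
    rw [lintegral_one, measure_univ]
    exact ENNReal.one_lt_top
  have hterm_fin : ∀ j, M.w j * ∫⁻ ω, C ω j / M.cardA T ω ∂(Q j) ≠ ∞ := fun j =>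
    (ENNReal.mul_lt_top (lt_of_le_of_lt (w_le_one hΩ M j) ENNReal.one_lt_top)
      (hdiv_int j)).ne
  refine (ENNReal.toReal_eq_toReal_iff' hCbarP_fin ?_).mp ?_
  · exact (ENNReal.sum_lt_top.mpr fun j _ => (hterm_fin j).lt_top).ne
  · rw [← integral_toReal (meas_Cbar hCm).aemeasurable
      (Filter.Eventually.of_forall fun ω => (hbdd ω).trans_lt ENNReal.one_lt_top),
      hmain, ENNReal.toReal_sum (fun j _ => hterm_fin j)]
    refine Finset.sum_congr rfl fun j _ => ?_
    rw [ENNReal.toReal_mul, integral_toReal (hdiv_meas j).aemeasurable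
      (ae_lt_top (hdiv_meas j) (hdiv_int j).ne)]

end MarketModel
namespace MarketModel

variable {d : ℕ} {Ω : Type*} [mΩ : MeasurableSpace Ω] {T : ℝ}
variable {M : MarketModel d Ω T} {Q : Fin d → Measure Ω}

lemma uniq_claim_Cbar_le_one (hB : MeasurableSet B) (i : Fin d) (ω : Ω) :
    M.Cbar (fun ω' j => B.indicator (fun _ => (1 : ℝ≥0∞)) ω' * M.S T ω' j i) ω ≤ 1 := by
  rw [uniq_claim_Cbar hB i ω]
  by_cases hω : ω ∈ B
  · rw [Set.indicator_of_mem hω, one_mul]; exact D_le_one i ω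
  · rw [Set.indicator_of_notMem hω, zero_mul]; exact zero_le_one

lemma lintegral_uniq_claim_Cbar (hB : MeasurableSet B) (i : Fin d) (μ : Measure Ω) :
    ∫⁻ ω, M.Cbar (fun ω' j => B.indicator (fun _ => (1 : ℝ≥0∞)) ω' * M.S T ω' j i) ω ∂μ
      = ∫⁻ ω in B, M.Cbar (fun ω' j => M.S T ω' j i) ω ∂μ := by
  rw [← lintegral_indicator hB]
  refine lintegral_congr fun ω => ?_
  rw [uniq_claim_Cbar hB i ω]
  by_cases hω : ω ∈ B
  · rw [Set.indicator_of_mem hω, Set.indicator_of_mem hω, one_mul]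
  · rw [Set.indicator_of_notMem hω, Set.indicator_of_notMem hω, zero_mul]

lemma aggregate_unique (hd : 0 < d) (hQ : NumeraireConsistent M Q) {P : Measure Ω}
    (hval : IsValuationMeasure M P)
    (hac : P ≪ (∑ i, Q i) ∧ (∑ i, Q i) ≪ P)
    (hform : ∀ r ∈ Set.Icc (0 : ℝ) T, ∀ C : Ω → Fin d → ℝ≥0∞, M.IsClaim C →
      (∀ i, ∫⁻ ω, C ω i ∂(Q i) < ∞) → AggregationFormula M P Q C r) :
    P = aggregate M Q := by
  have hPP := hval.1
  have hAgg := aggregate_isProb hd hQ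
  -- step 1: the densities `D i` integrate equally over every measurable set
  have hWD : ∀ (i : Fin d) (B : Set Ω), MeasurableSet B →
      ∫⁻ ω in B, M.Cbar (fun ω' j => M.S T ω' j i) ω ∂P
        = ∫⁻ ω in B, M.Cbar (fun ω' j => M.S T ω' j i) ω ∂(aggregate M Q) := by
    intro i B hB
    have hcl := uniq_claim (M := M) hB i
    have hint := fun j => uniq_claim_int hQ hB i j
    have h1 := formula_determines hd hQ hPP
      (hform 0 (h0_mem M) _ hcl hint) hcl hint (uniq_claim_Cbar_le_one hB i)
    have h2 := formula_determines hd hQ hAgg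
      (aggregate_formula hd hQ (h0_mem M) hcl hint) hcl hint (uniq_claim_Cbar_le_one hB i)
    rw [← lintegral_uniq_claim_Cbar hB i P, ← lintegral_uniq_claim_Cbar hB i (aggregate M Q),
      h1, h2]
  -- step 2: equality on measurable subsets of `{0 < D i}`
  have heqsub : ∀ (i : Fin d) (B' : Set Ω), MeasurableSet B' →
      (B' ⊆ {ω | 0 < M.Cbar (fun ω' j => M.S T ω' j i) ω}) →
      P B' = aggregate M Q B' := by
    intro i B' hB' hsubset
    have hDm : Measurable (M.Cbar (fun ω' j => M.S T ω' j i)) := D_meas i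
    have calcμ : ∀ μ : Measure Ω, μ B'
        = ∫⁻ ω in B', M.Cbar (fun ω' j => M.S T ω' j i) ω
            * (M.Cbar (fun ω' j => M.S T ω' j i) ω)⁻¹ ∂μ := by
      intro μ
      rw [← setLIntegral_one]
      refine setLIntegral_congr_fun hB'
        (fun ω hω => ?_)
      exact (ENNReal.mul_inv_cancel (hsubset hω).ne'
        ((D_le_one i ω).trans_lt ENNReal.one_lt_top).ne).symm
    have hvia : ∀ μ : Measure Ω,
        ∫⁻ ω in B', M.Cbar (fun ω' j => M.S T ω' j i) ω
            * (M.Cbar (fun ω' j => M.S T ω' j i) ω)⁻¹ ∂μ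
          = ∫⁻ ω in B', (M.Cbar (fun ω' j => M.S T ω' j i) ω)⁻¹
              ∂(μ.withDensity (M.Cbar (fun ω' j => M.S T ω' j i))) := by
      intro μ
      rw [restrict_withDensity hB',
        lintegral_withDensity_eq_lintegral_mul _ hDm (g := fun ω => (M.Cbar (fun ω' j => M.S T ω' j i) ω)⁻¹) hDm.inv]
      rfl
    have hWD' : ∫⁻ ω in B', (M.Cbar (fun ω' j => M.S T ω' j i) ω)⁻¹
          ∂(P.withDensity (M.Cbar (fun ω' j => M.S T ω' j i)))
        = ∫⁻ ω in B', (M.Cbar (fun ω' j => M.S T ω' j i) ω)⁻¹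
          ∂((aggregate M Q).withDensity (M.Cbar (fun ω' j => M.S T ω' j i))) := by
      have : P.withDensity (M.Cbar (fun ω' j => M.S T ω' j i))
          = (aggregate M Q).withDensity (M.Cbar (fun ω' j => M.S T ω' j i)) := by
        refine Measure.ext fun s hs => ?_
        rw [withDensity_apply _ hs, withDensity_apply _ hs]
        exact hWD i s hs
      rw [this]
    rw [calcμ P, calcμ (aggregate M Q), hvia P, hvia (aggregate M Q), hWD']
  -- step 3: the inactive-everywhere event is null for both measures
  have hNAm : MeasurableSet {ω : Ω | ∀ j : Fin d, ¬ ∑ k, M.S T ω j k < ∞} := by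
    have heq : {ω : Ω | ∀ j : Fin d, ¬ ∑ k, M.S T ω j k < ∞}
        = ⋂ j, {ω : Ω | ∑ k, M.S T ω j k < ∞}ᶜ := by
      ext ω; simp [Set.mem_iInter]
    rw [heq]
    exact MeasurableSet.iInter fun j => (M.F.le T _ (measSet_active (hT_mem M) j)).compl
  have hNAsum : (∑ i', Q i') {ω : Ω | ∀ j : Fin d, ¬ ∑ k, M.S T ω j k < ∞} = 0 := by
    rw [Measure.finset_sum_apply]
    refine Finset.sum_eq_zero fun j _ => ?_
    refine measure_mono_null (fun ω hω => hω j) ?_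
    have hae := activeAE hQ j (hT_mem M)
    rw [ae_iff] at hae
    exact hae
  have hPNA : P {ω : Ω | ∀ j : Fin d, ¬ ∑ k, M.S T ω j k < ∞} = 0 := hac.1 hNAsum
  have hANA : aggregate M Q {ω : Ω | ∀ j : Fin d, ¬ ∑ k, M.S T ω j k < ∞} = 0 :=
    (aggregate_equiv hd hQ).1 hNAsum
  -- step 4: finset induction over the covering
  have hind : ∀ (Fs : Finset (Fin d)) (B : Set Ω), MeasurableSet B →
      (B ⊆ ⋃ i ∈ Fs, {ω | 0 < M.Cbar (fun ω' j => M.S T ω' j i) ω}) →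
      P B = aggregate M Q B := by
    classical
    intro Fs
    induction Fs using Finset.induction_on with
    | empty =>
        intro B hB hsub
        have hBe : B = ∅ := Set.subset_empty_iff.mp (by simpa using hsub)
        simp [hBe]
    | @insert a Fs' haF ih =>
        intro B hB hsub
        have hGa : MeasurableSet {ω | 0 < M.Cbar (fun ω' j => M.S T ω' j a) ω} :=
          measurableSet_lt measurable_const (D_meas a)
        have h1 : P (B ∩ {ω | 0 < M.Cbar (fun ω' j => M.S T ω' j a) ω})
            = aggregate M Q (B ∩ {ω | 0 < M.Cbar (fun ω' j => M.S T ω' j a) ω}) :=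
          heqsub a _ (hB.inter hGa) Set.inter_subset_right
        have h2 : P (B \ {ω | 0 < M.Cbar (fun ω' j => M.S T ω' j a) ω})
            = aggregate M Q (B \ {ω | 0 < M.Cbar (fun ω' j => M.S T ω' j a) ω}) := by
          refine ih _ (hB.diff hGa) ?_
          intro ω hω
          have hmem := hsub hω.1
          simp only [Set.mem_iUnion] at hmem ⊢
          obtain ⟨i, hiF, hi⟩ := hmem
          rcases Finset.mem_insert.mp hiF with h | h
          · exact absurd (h ▸ hi) hω.2
          · exact ⟨i, h, hi⟩
        rw [← measure_inter_add_diff B hGa, h1, h2,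
          measure_inter_add_diff B hGa]
  -- conclude
  refine Measure.ext fun B hB => ?_
  have hsplit : ∀ μ : Measure Ω,
      μ {ω : Ω | ∀ j : Fin d, ¬ ∑ k, M.S T ω j k < ∞} = 0 →
      μ B = μ (B \ {ω : Ω | ∀ j : Fin d, ¬ ∑ k, M.S T ω j k < ∞}) := by
    intro μ h0
    have hh := measure_inter_add_diff (μ := μ) B hNAm
    have hint : μ (B ∩ {ω : Ω | ∀ j : Fin d, ¬ ∑ k, M.S T ω j k < ∞}) = 0 :=
      measure_mono_null Set.inter_subset_right h0
    rw [← hh, hint, zero_add]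
  rw [hsplit P hPNA, hsplit (aggregate M Q) hANA]
  refine hind Finset.univ _ (hB.diff hNAm) ?_
  intro ω hω
  have hω2 := hω.2
  simp only [Set.mem_setOf_eq, not_forall, not_not] at hω2
  obtain ⟨j, hj⟩ := hω2
  simp only [Set.mem_iUnion]
  exact ⟨j, Finset.mem_univ j, D_pos hj⟩

end MarketModel

/-- Theorem, aggregation: given a numéraire-consistent family `(Q_i)`, there
is a unique valuation measure `Q̄` with respect to the basket, equivalent to `∑ i, Q i`,
satisfying the aggregation valuation formula for all `r ∈ [0, T]` and all claims `C` with
`C_i ∈ L¹(Q_i)` for all `i`. -/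
theorem aggregation_exists_unique {d : ℕ} {Ω : Type*} [MeasurableSpace Ω] {T : ℝ}
    (hd : 0 < d) (M : MarketModel d Ω T) (Q : Fin d → Measure Ω)
    (hQ : NumeraireConsistent M Q) :
    ∃! Qb : Measure Ω,
      IsValuationMeasure M Qb ∧
      (Qb ≪ (∑ i, Q i) ∧ (∑ i, Q i) ≪ Qb) ∧
      ∀ r ∈ Set.Icc (0 : ℝ) T, ∀ C : Ω → Fin d → ℝ≥0∞, M.IsClaim C →
        (∀ i, ∫⁻ ω, C ω i ∂(Q i) < ∞) → AggregationFormula M Qb Q C r := by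
  refine ⟨MarketModel.aggregate M Q, ⟨MarketModel.aggregate_valuation hd hQ,
    MarketModel.aggregate_equiv hd hQ,
    fun r hr C hC hCint => MarketModel.aggregate_formula hd hQ hr hC hCint⟩, ?_⟩
  rintro P ⟨hval, hac, hform⟩
  exact MarketModel.aggregate_unique hd hQ hval hac hform
end
end

section
/- Let (Q_i)_{i=1}^d be a family of probability measures on (Ω, F(T)) such that for each i the i-th row S_i = (S_{i,j})_j of the exchange-matrix process is a Q_i-martingale (each entry real-valued and integrable under Q_i). Then there exists a valuation measure Q̄ with respect to the basket that is equivalent to ∑_i Q_i. Explicitly, one may take Q̄ = (1/d)·∑_i Q̃_i, where dQ̃_i/dQ_i = (∑_j S_{i,j}(T))/(∑_j S_{i,j}(0)). -/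
open MeasureTheory Filter Set Function
open scoped ENNReal

noncomputable section

section Aux

lemma ENNReal.row_sum_one_le {d : ℕ} {s : Fin d → Fin d → ℝ≥0∞} (hs : IsExchangeMatrix s)
    (k : Fin d) : (1 : ℝ≥0∞) ≤ ∑ j, s k j := by
  calc (1 : ℝ≥0∞) = s k k := (hs.diag k).symm
    _ ≤ ∑ j, s k j := Finset.single_le_sum (f := s k) (fun _ _ => zero_le) (Finset.mem_univ k)

lemma exchange_key {d : ℕ} {s : Fin d → Fin d → ℝ≥0∞} (hs : IsExchangeMatrix s)
    (k i : Fin d) (hk : ∀ j, s k j ≠ ∞) :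
    (∑ j, s i j)⁻¹ * ∑ j, s k j = s k i := by
  have hrow1 : (1 : ℝ≥0∞) ≤ ∑ j, s k j := ENNReal.row_sum_one_le hs k
  have hfin : ∑ j, s k j ≠ ∞ := by
    refine (ENNReal.sum_lt_top.mpr fun j _ => ?_).ne
    exact lt_top_iff_ne_top.mpr (hk j)
  rcases eq_or_ne (s k i) 0 with h0 | hne0
  · have hik : s i k = ∞ := by
      by_contra h
      have hdef : DefinedProd (s i k) (s k i) := by
        constructor
        · rintro ⟨-, hc⟩; exact (hk i) hc
        · rintro ⟨hc, -⟩; exact h hc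
      have := hs.consistent i k i hdef
      rw [h0, mul_zero, hs.diag i] at this
      exact one_ne_zero this.symm
    have hsum : ∑ j, s i j = ∞ := by
      refine eq_top_iff.mpr ?_
      calc (∞ : ℝ≥0∞) = s i k := hik.symm
        _ ≤ ∑ j, s i j := Finset.single_le_sum (f := s i) (fun _ _ => zero_le) (Finset.mem_univ k)
    rw [hsum, ENNReal.inv_top, zero_mul, h0]
  · have hkifin : s k i ≠ ∞ := hk i
    have hdef : DefinedProd (s i k) (s k i) := by
      constructor
      · rintro ⟨-, hc⟩; exact hkifin hc
      · rintro ⟨-, hc⟩; exact hne0 hc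
    have hik : s i k * s k i = 1 := by rw [hs.consistent i k i hdef, hs.diag i]
    have hikval : s i k = (s k i)⁻¹ := by
      have := congrArg (· * (s k i)⁻¹) hik
      simpa [mul_assoc, ENNReal.mul_inv_cancel hne0 hkifin] using this
    have hikfin : s i k ≠ ∞ := by rw [hikval]; exact ENNReal.inv_ne_top.mpr hne0
    have hik0 : s i k ≠ 0 := by rw [hikval]; exact ENNReal.inv_ne_zero.mpr hkifin
    have hrow : ∀ j, s i j = s i k * s k j := by
      intro j
      have hdef2 : DefinedProd (s i k) (s k j) := by
        constructor
        · rintro ⟨hc, -⟩; exact hik0 hc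
        · rintro ⟨hc, -⟩; exact hikfin hc
      exact (hs.consistent i k j hdef2).symm
    have hsum : ∑ j, s i j = s i k * ∑ j, s k j := by
      rw [Finset.mul_sum]; exact Finset.sum_congr rfl fun j _ => hrow j
    have hsumk0 : (∑ j, s k j) ≠ 0 := fun h => by simp [h] at hrow1
    rw [hsum, ENNReal.mul_inv (Or.inl hik0) (Or.inl hikfin), hikval, inv_inv,
      mul_assoc, ENNReal.inv_mul_cancel hsumk0 hfin, mul_one]

end Aux
section Aux2

variable {d : ℕ} {Ω : Type*} [mΩ : MeasurableSpace Ω] {T : ℝ}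

lemma sbar_le_one (M : MarketModel d Ω T) {s : ℝ} (hs : s ∈ Set.Icc (0:ℝ) T) (i : Fin d)
    (ω : Ω) : M.Sbar i s ω ≤ 1 :=
  ENNReal.inv_le_one.mpr (ENNReal.row_sum_one_le (M.exchange_S s hs ω) i)

lemma sbar_meas (M : MarketModel d Ω T) {s : ℝ} (hs : s ∈ Set.Icc (0:ℝ) T) (i : Fin d) :
    Measurable[M.F s] (fun ω => M.Sbar i s ω) :=
  (Finset.measurable_sum Finset.univ fun j _ => M.adapted_S s hs i j).inv

lemma claim_C (M : MarketModel d Ω T) (Qk : Measure Ω) [IsProbabilityMeasure Qk] (k i : Fin d)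
    (hmart : ∀ j, MartingaleOn M.F Qk (fun t ω => (M.S t ω k j).toReal) T)
    (hfin : ∀ t ∈ Set.Icc (0:ℝ) T, ∀ j, ∀ᵐ ω ∂Qk, M.S t ω k j ≠ ∞)
    (s : ℝ) (hs : s ∈ Set.Icc (0:ℝ) T)
    (A : Set Ω) (hA : MeasurableSet[M.F s] A) :
    ∫⁻ ω, A.indicator (fun ω => M.Sbar i s ω) ω * ∑ j, M.S T ω k j ∂Qk
      = ENNReal.ofReal (∫ ω in A, (M.S s ω k i).toReal ∂Qk) := by
  have hT : T ∈ Set.Icc (0:ℝ) T := ⟨M.T_pos.le, le_refl T⟩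
  have hm : M.F s ≤ mΩ := M.F.le s
  have hA' : MeasurableSet A := hm A hA
  haveI : SigmaFinite (Qk.trim hm) := inferInstance
  have hSbarMeas := sbar_meas M hs i
  have hSbar_le := fun ω => sbar_le_one M hs i ω
  set g : Ω → ℝ := A.indicator fun ω => (M.Sbar i s ω).toReal with hg_def
  have hg_meas_Fs : StronglyMeasurable[M.F s] g :=
    ((hSbarMeas.ennreal_toReal).indicator hA).stronglyMeasurable
  have hg_nn : ∀ ω, 0 ≤ g ω := fun ω => by
    by_cases h : ω ∈ A <;> simp [hg_def, h, ENNReal.toReal_nonneg]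
  have hg_bdd : ∀ ω, ‖g ω‖ ≤ 1 := by
    intro ω
    rw [Real.norm_eq_abs, abs_of_nonneg (hg_nn ω)]
    by_cases h : ω ∈ A
    · simpa [hg_def, h] using ENNReal.toReal_mono ENNReal.one_ne_top (hSbar_le ω)
    · simp [hg_def, h]
  -- integrability facts
  have hXT_int : ∀ j, Integrable (fun ω => (M.S T ω k j).toReal) Qk :=
    fun j => ((hmart j).1 T hT).2
  have hXs_int : ∀ j, Integrable (fun ω => (M.S s ω k j).toReal) Qk :=
    fun j => ((hmart j).1 s hs).2
  have hgXT_int : ∀ j, Integrable (fun ω => g ω * (M.S T ω k j).toReal) Qk := fun j =>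
    (hXT_int j).bdd_mul ((hg_meas_Fs.mono hm).aestronglyMeasurable) (Filter.Eventually.of_forall hg_bdd)
  have hgXs_int : ∀ j, Integrable (fun ω => g ω * (M.S s ω k j).toReal) Qk := fun j =>
    (hXs_int j).bdd_mul ((hg_meas_Fs.mono hm).aestronglyMeasurable) (Filter.Eventually.of_forall hg_bdd)
  -- step 1 : lintegral to integral, per j
  have claim1 : ∀ j, ∫⁻ ω, A.indicator (fun ω => M.Sbar i s ω) ω * M.S T ω k j ∂Qk
      = ENNReal.ofReal (∫ ω, g ω * (M.S T ω k j).toReal ∂Qk) := by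
    intro j
    rw [MeasureTheory.ofReal_integral_eq_lintegral_ofReal (hgXT_int j)
      (Filter.Eventually.of_forall fun ω => mul_nonneg (hg_nn ω) ENNReal.toReal_nonneg)]
    refine lintegral_congr_ae ?_
    filter_upwards [hfin T hT j] with ω hω
    by_cases h : ω ∈ A
    · have hSbar_ne : M.Sbar i s ω ≠ ∞ := (lt_of_le_of_lt (hSbar_le ω) ENNReal.one_lt_top).ne
      simp only [Set.indicator_of_mem h, hg_def]
      rw [ENNReal.ofReal_mul ENNReal.toReal_nonneg, ENNReal.ofReal_toReal hSbar_ne,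
        ENNReal.ofReal_toReal hω]
    · simp [Set.indicator_of_notMem h, hg_def]
  -- step 2 : conditional expectation step, per j
  have claim2 : ∀ j, ∫ ω, g ω * (M.S T ω k j).toReal ∂Qk
      = ∫ ω, g ω * (M.S s ω k j).toReal ∂Qk := by
    intro j
    have hce : Qk[(fun ω => g ω * (M.S T ω k j).toReal)|M.F s]
        =ᵐ[Qk] fun ω => g ω * (Qk[(fun ω => (M.S T ω k j).toReal)|M.F s]) ω := by
      have := condExp_mul_of_stronglyMeasurable_left (μ := Qk) (m := M.F s) hg_meas_Fs
        (g := fun ω => (M.S T ω k j).toReal) (hgXT_int j) (hXT_int j)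
      exact this
    have hmg : Qk[(fun ω => (M.S T ω k j).toReal)|M.F s]
        =ᵐ[Qk] fun ω => (M.S s ω k j).toReal := (hmart j).2 s hs T hT hs.2
    calc ∫ ω, g ω * (M.S T ω k j).toReal ∂Qk
        = ∫ ω, (Qk[(fun ω => g ω * (M.S T ω k j).toReal)|M.F s]) ω ∂Qk :=
          (integral_condExp hm).symm
      _ = ∫ ω, g ω * (Qk[(fun ω => (M.S T ω k j).toReal)|M.F s]) ω ∂Qk :=
          integral_congr_ae hce
      _ = ∫ ω, g ω * (M.S s ω k j).toReal ∂Qk := by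
          refine integral_congr_ae ?_
          filter_upwards [hmg] with ω hω
          rw [hω]
  -- step 3 : sum over j and exchange identity
  have claim3 : ∑ j, ∫ ω, g ω * (M.S s ω k j).toReal ∂Qk
      = ∫ ω in A, (M.S s ω k i).toReal ∂Qk := by
    rw [← integral_finset_sum Finset.univ (fun j _ => hgXs_int j),
      ← integral_indicator hA']
    refine integral_congr_ae ?_
    have hfinall : ∀ᵐ ω ∂Qk, ∀ j, M.S s ω k j ≠ ∞ := ae_all_iff.mpr (hfin s hs)
    filter_upwards [hfinall] with ω hω
    by_cases h : ω ∈ A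
    · simp only [hg_def, Set.indicator_of_mem h]
      rw [← Finset.mul_sum, ← ENNReal.toReal_sum (fun j _ => hω j), ← ENNReal.toReal_mul]
      simp only [MarketModel.Sbar]
      rw [exchange_key (M.exchange_S s hs ω) k i hω]
    · simp [hg_def, Set.indicator_of_notMem h]
  -- assemble
  calc ∫⁻ ω, A.indicator (fun ω => M.Sbar i s ω) ω * ∑ j, M.S T ω k j ∂Qk
      = ∫⁻ ω, ∑ j, A.indicator (fun ω => M.Sbar i s ω) ω * M.S T ω k j ∂Qk := by
        refine lintegral_congr fun ω => ?_
        rw [Finset.mul_sum]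
    _ = ∑ j, ∫⁻ ω, A.indicator (fun ω => M.Sbar i s ω) ω * M.S T ω k j ∂Qk := by
        refine lintegral_finset_sum Finset.univ fun j _ => ?_
        exact ((hSbarMeas.mono hm le_rfl).indicator hA').mul
          ((M.adapted_S T hT k j).mono (M.F.le T) le_rfl)
    _ = ∑ j, ENNReal.ofReal (∫ ω, g ω * (M.S s ω k j).toReal ∂Qk) := by
        refine Finset.sum_congr rfl fun j _ => ?_
        rw [claim1 j, claim2 j]
    _ = ENNReal.ofReal (∑ j, ∫ ω, g ω * (M.S s ω k j).toReal ∂Qk) := by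
        rw [ENNReal.ofReal_sum_of_nonneg]
        intro j _
        exact integral_nonneg fun ω => mul_nonneg (hg_nn ω) ENNReal.toReal_nonneg
    _ = ENNReal.ofReal (∫ ω in A, (M.S s ω k i).toReal ∂Qk) := by rw [claim3]

end Aux2
section Aux3

variable {d : ℕ} {Ω : Type*} [mΩ : MeasurableSpace Ω] {T : ℝ}

lemma row_lintegral_eq (M : MarketModel d Ω T) (Qk : Measure Ω) [IsProbabilityMeasure Qk]
    (k i : Fin d)
    (hmart : ∀ j, MartingaleOn M.F Qk (fun t ω => (M.S t ω k j).toReal) T)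
    (hfin : ∀ t ∈ Set.Icc (0:ℝ) T, ∀ j, ∀ᵐ ω ∂Qk, M.S t ω k j ≠ ∞)
    {r t : ℝ} (hr : r ∈ Set.Icc (0:ℝ) T) (ht : t ∈ Set.Icc (0:ℝ) T) (hrt : r ≤ t)
    (A : Set Ω) (hA : MeasurableSet[M.F r] A) :
    ∫⁻ ω, A.indicator (fun ω => M.Sbar i t ω) ω * ∑ j, M.S T ω k j ∂Qk
      = ∫⁻ ω, A.indicator (fun ω => M.Sbar i r ω) ω * ∑ j, M.S T ω k j ∂Qk := by
  have hm : M.F r ≤ mΩ := M.F.le r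
  haveI : SigmaFinite (Qk.trim hm) := inferInstance
  have hAt : MeasurableSet[M.F t] A := M.F.mono hrt A hA
  rw [claim_C M Qk k i hmart hfin t ht A hAt, claim_C M Qk k i hmart hfin r hr A hA]
  congr 1
  have hce : Qk[(fun ω => (M.S t ω k i).toReal)|M.F r]
      =ᵐ[Qk] fun ω => (M.S r ω k i).toReal := (hmart i).2 r hr t ht hrt
  calc ∫ ω in A, (M.S t ω k i).toReal ∂Qk
      = ∫ ω in A, (Qk[(fun ω => (M.S t ω k i).toReal)|M.F r]) ω ∂Qk :=
        (setIntegral_condExp hm ((hmart i).1 t ht).2 hA).symm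
    _ = ∫ ω in A, (M.S r ω k i).toReal ∂Qk :=
        integral_congr_ae (ae_restrict_of_ae hce)

lemma lintegral_ST (M : MarketModel d Ω T) (Qk : Measure Ω) [IsProbabilityMeasure Qk]
    (k j : Fin d)
    (hmart : MartingaleOn M.F Qk (fun t ω => (M.S t ω k j).toReal) T)
    (hfinT : ∀ᵐ ω ∂Qk, M.S T ω k j ≠ ∞) :
    ∫⁻ ω, M.S T ω k j ∂Qk = M.S0 k j := by
  have hT : T ∈ Set.Icc (0:ℝ) T := ⟨M.T_pos.le, le_refl T⟩
  have h0 : (0:ℝ) ∈ Set.Icc (0:ℝ) T := ⟨le_refl 0, M.T_pos.le⟩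
  have hm : M.F 0 ≤ mΩ := M.F.le 0
  haveI : SigmaFinite (Qk.trim hm) := inferInstance
  have hS0_ne : M.S0 k j ≠ ∞ := by
    refine (lt_of_le_of_lt ?_ (M.active_S0 k)).ne
    exact Finset.single_le_sum (f := M.S0 k) (fun _ _ => zero_le) (Finset.mem_univ j)
  have hint : ∫ ω, (M.S T ω k j).toReal ∂Qk = (M.S0 k j).toReal := by
    have hce : Qk[(fun ω => (M.S T ω k j).toReal)|M.F 0]
        =ᵐ[Qk] fun ω => (M.S 0 ω k j).toReal := hmart.2 0 h0 T hT M.T_pos.le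
    calc ∫ ω, (M.S T ω k j).toReal ∂Qk
        = ∫ ω, (Qk[(fun ω => (M.S T ω k j).toReal)|M.F 0]) ω ∂Qk := (integral_condExp hm).symm
      _ = ∫ ω, (M.S 0 ω k j).toReal ∂Qk := integral_congr_ae hce
      _ = ∫ (_ : Ω), (M.S0 k j).toReal ∂Qk := by
          refine integral_congr_ae (Filter.Eventually.of_forall fun ω => ?_)
          simp only [M.init_S ω]
      _ = (M.S0 k j).toReal := by simp
  have hnn : 0 ≤ᵐ[Qk] fun ω => (M.S T ω k j).toReal :=
    Filter.Eventually.of_forall fun ω => ENNReal.toReal_nonneg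
  have := MeasureTheory.ofReal_integral_eq_lintegral_ofReal (hmart.1 T hT).2 hnn
  rw [hint] at this
  rw [ENNReal.ofReal_toReal hS0_ne] at this
  rw [this]
  refine lintegral_congr_ae ?_
  filter_upwards [hfinT] with ω hω
  simp [ENNReal.ofReal_toReal hω]

end Aux3

/-- Theorem, aggregation without consistency, case (a): if each row `S_i` is a
`Q_i`-martingale (real-valued and integrable), then
`Q̄ = (1/d) ∑ i Q̃_i` with `dQ̃_i/dQ_i = (∑_j S_{i,j}(T))/(∑_j S_{i,j}(0))` is a valuation
measure with respect to the basket, equivalent to `∑ i, Q i`. -/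
theorem aggregation_of_martingale_rows {d : ℕ} {Ω : Type*} [MeasurableSpace Ω] {T : ℝ}
    (hd : 0 < d) (M : MarketModel d Ω T) (Q : Fin d → Measure Ω)
    (hprob : ∀ i, IsProbabilityMeasure (Q i))
    (hmart : ∀ i j, MartingaleOn M.F (Q i) (fun t ω => (M.S t ω i j).toReal) T)
    (hfin : ∀ i, ∀ t ∈ Set.Icc (0 : ℝ) T, ∀ j, ∀ᵐ ω ∂(Q i), M.S t ω i j ≠ ∞) :
    ∃ Qb : Measure Ω,
      Qb = (d : ℝ≥0∞)⁻¹ • ∑ i, (Q i).withDensity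
          (fun ω => (∑ j, M.S T ω i j) / (∑ j, M.S0 i j)) ∧
      IsValuationMeasure M Qb ∧ Qb ≪ (∑ i, Q i) ∧ (∑ i, Q i) ≪ Qb := by
  classical
  have hT : T ∈ Set.Icc (0:ℝ) T := ⟨M.T_pos.le, le_refl T⟩
  -- nonemptiness of Ω
  rcases isEmpty_or_nonempty Ω with hE | hΩ
  · haveI := hprob ⟨0, hd⟩
    exact absurd (measure_univ (μ := Q ⟨0, hd⟩)) (by simp [Set.univ_eq_empty_iff.mpr hE])
  obtain ⟨ω₀⟩ := hΩ
  -- basic facts about the initial matrix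
  have hcfin : ∀ k, (∑ j, M.S0 k j) ≠ ∞ := fun k => (M.active_S0 k).ne
  have hS0diag : ∀ k : Fin d, M.S0 k k = 1 := by
    intro k
    have h := (M.exchange_S 0 ⟨le_refl 0, M.T_pos.le⟩ ω₀).diag k
    rwa [M.init_S ω₀] at h
  have hc1 : ∀ k, (1:ℝ≥0∞) ≤ ∑ j, M.S0 k j := fun k => by
    calc (1:ℝ≥0∞) = M.S0 k k := (hS0diag k).symm
      _ ≤ _ := Finset.single_le_sum (f := M.S0 k) (fun _ _ => zero_le) (Finset.mem_univ k)
  have hc0 : ∀ k, (∑ j, M.S0 k j) ≠ 0 := by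
    intro k h
    have := hc1 k
    rw [h] at this
    simp at this
  -- measurability
  have hrowT_meas : ∀ k, Measurable fun ω => ∑ j, M.S T ω k j :=
    fun k => Finset.measurable_sum Finset.univ fun j _ =>
      (M.adapted_S T hT k j).mono (M.F.le T) le_rfl
  have hf_meas : ∀ k, Measurable fun ω => (∑ j, M.S T ω k j) / (∑ j, M.S0 k j) :=
    fun k => (hrowT_meas k).div_const _
  -- total mass of each density measure
  have hν_univ : ∀ k, (Q k).withDensity
      (fun ω => (∑ j, M.S T ω k j) / (∑ j, M.S0 k j)) Set.univ = 1 := by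
    intro k
    haveI := hprob k
    rw [withDensity_apply _ MeasurableSet.univ, Measure.restrict_univ]
    have h1 : ∫⁻ ω, (∑ j, M.S T ω k j) / (∑ j, M.S0 k j) ∂(Q k)
        = (∫⁻ ω, ∑ j, M.S T ω k j ∂(Q k)) * (∑ j, M.S0 k j)⁻¹ := by
      simp only [div_eq_mul_inv]
      exact lintegral_mul_const _ (hrowT_meas k)
    rw [h1, lintegral_finset_sum _ (fun j _ => (M.adapted_S T hT k j).mono (M.F.le T) le_rfl)]
    have h2 : ∑ j, ∫⁻ ω, M.S T ω k j ∂(Q k) = ∑ j, M.S0 k j :=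
      Finset.sum_congr rfl fun j _ => lintegral_ST M (Q k) k j (hmart k j) (hfin k T hT j)
    rw [h2, ENNReal.mul_inv_cancel (hc0 k) (hcfin k)]
  set Qb : Measure Ω := (d : ℝ≥0∞)⁻¹ • ∑ i, (Q i).withDensity
      (fun ω => (∑ j, M.S T ω i j) / (∑ j, M.S0 i j)) with hQb
  have hQb_apply : ∀ A : Set Ω, Qb A = (d:ℝ≥0∞)⁻¹ *
      ∑ k, (Q k).withDensity (fun ω => (∑ j, M.S T ω k j) / (∑ j, M.S0 k j)) A := by
    intro A
    rw [hQb, Measure.smul_apply, Measure.finset_sum_apply, smul_eq_mul]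
  have hQbprob : IsProbabilityMeasure Qb := by
    constructor
    rw [hQb_apply]
    simp only [hν_univ]
    simp [Finset.card_univ, ENNReal.inv_mul_cancel
      (show (d:ℝ≥0∞) ≠ 0 from Nat.cast_ne_zero.mpr hd.ne') (ENNReal.natCast_ne_top d)]
  -- integrability of the quoted prices under Qb
  have hSbar_int : ∀ u, u ∈ Set.Icc (0:ℝ) T →
      ∀ i, Integrable (fun ω => (M.Sbar i u ω).toReal) Qb := by
    intro u hu i
    haveI := hQbprob
    refine Integrable.mono' (integrable_const (1:ℝ))
      ((Measurable.ennreal_toReal ((sbar_meas M hu i).mono (M.F.le u) le_rfl)).aestronglyMeasurable)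
      (Filter.Eventually.of_forall fun ω => ?_)
    rw [Real.norm_eq_abs, abs_of_nonneg ENNReal.toReal_nonneg]
    simpa using ENNReal.toReal_mono ENNReal.one_ne_top (sbar_le_one M hu i ω)
  refine ⟨Qb, rfl, ⟨hQbprob, ?_⟩, ?_, ?_⟩
  · -- the martingale property of the quoted prices
    intro i
    constructor
    · intro t ht
      exact ⟨(Measurable.ennreal_toReal (sbar_meas M ht i)).stronglyMeasurable, hSbar_int t ht i⟩
    · intro r hr t ht hrt
      haveI := hQbprob
      have hm : (M.F r : MeasurableSpace Ω) ≤ _ := M.F.le r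
      haveI : SigmaFinite (Qb.trim hm) := inferInstance
      refine (ae_eq_condExp_of_forall_setIntegral_eq hm (hSbar_int t ht i)
        (fun s hs _ => (hSbar_int r hr i).integrableOn)
        (fun A hA _ => ?_)
        ((Measurable.ennreal_toReal (sbar_meas M hr i)).stronglyMeasurable.aestronglyMeasurable)).symm
      -- key equality of set integrals
      have hA' : MeasurableSet A := hm A hA
      have expand : ∀ u, u ∈ Set.Icc (0:ℝ) T →
          ∫⁻ ω, A.indicator (fun ω => M.Sbar i u ω) ω ∂Qb
            = (d:ℝ≥0∞)⁻¹ * ∑ k, (∑ j, M.S0 k j)⁻¹ *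
              ∫⁻ ω, A.indicator (fun ω => M.Sbar i u ω) ω * ∑ j, M.S T ω k j ∂(Q k) := by
        intro u hu
        have hmeas_ind : Measurable fun ω => A.indicator (fun ω => M.Sbar i u ω) ω :=
          ((sbar_meas M hu i).mono (M.F.le u) le_rfl).indicator hA'
        rw [hQb, lintegral_smul_measure, lintegral_finset_sum_measure]
        congr 1
        refine Finset.sum_congr rfl fun k _ => ?_
        rw [lintegral_withDensity_eq_lintegral_mul (Q k) (hf_meas k) hmeas_ind]
        have hpt : ∀ ω, ((fun ω => (∑ j, M.S T ω k j) / (∑ j, M.S0 k j)) *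
            (fun ω => A.indicator (fun ω => M.Sbar i u ω) ω)) ω
            = (∑ j, M.S0 k j)⁻¹ *
              (A.indicator (fun ω => M.Sbar i u ω) ω * ∑ j, M.S T ω k j) := by
          intro ω
          simp only [Pi.mul_apply, div_eq_mul_inv]
          ring
        rw [lintegral_congr hpt, lintegral_const_mul _ (f := fun ω => A.indicator (fun ω => M.Sbar i u ω) ω * ∑ j, M.S T ω k j)
          (hmeas_ind.mul (hrowT_meas k))]
      have key : ∫⁻ ω, A.indicator (fun ω => M.Sbar i t ω) ω ∂Qb
          = ∫⁻ ω, A.indicator (fun ω => M.Sbar i r ω) ω ∂Qb := by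
        rw [expand t ht, expand r hr]
        congr 1
        refine Finset.sum_congr rfl fun k _ => ?_
        congr 1
        haveI := hprob k
        exact row_lintegral_eq M (Q k) k i (hmart k) (hfin k) hr ht hrt A hA
      have conv : ∀ u, u ∈ Set.Icc (0:ℝ) T →
          ∫ ω in A, (M.Sbar i u ω).toReal ∂Qb
            = (∫⁻ ω, A.indicator (fun ω => M.Sbar i u ω) ω ∂Qb).toReal := by
        intro u hu
        rw [lintegral_indicator hA']
        exact integral_toReal
          (((sbar_meas M hu i).mono (M.F.le u) le_rfl).aemeasurable)
          (Filter.Eventually.of_forall fun ω =>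
            lt_of_le_of_lt (sbar_le_one M hu i ω) ENNReal.one_lt_top)
      rw [conv r hr, conv t ht, key]
  · -- Qb ≪ ∑ Q i
    intro A hA
    have hsum : (∑ k, Q k) A = ∑ k, Q k A := by rw [Measure.finset_sum_apply]
    rw [hsum] at hA
    have h0 : ∀ k, Q k A = 0 := fun k =>
      (Finset.sum_eq_zero_iff.mp hA) k (Finset.mem_univ k)
    have hν0 : ∀ k : Fin d, (Q k).withDensity
        (fun ω => (∑ j, M.S T ω k j) / (∑ j, M.S0 k j)) A = 0 := fun k =>
      withDensity_absolutelyContinuous (Q k) _ (h0 k)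
    rw [hQb_apply]
    simp [hν0]
  · -- ∑ Q i ≪ Qb
    intro A hA
    rw [hQb_apply] at hA
    have hd0 : ((d:ℝ≥0∞)⁻¹ : ℝ≥0∞) ≠ 0 := ENNReal.inv_ne_zero.mpr (ENNReal.natCast_ne_top d)
    have hsum0 : ∑ k, (Q k).withDensity
        (fun ω => (∑ j, M.S T ω k j) / (∑ j, M.S0 k j)) A = 0 := by
      rcases mul_eq_zero.mp hA with h | h
      · exact absurd h hd0
      · exact h
    have hν0 : ∀ k : Fin d, (Q k).withDensity
        (fun ω => (∑ j, M.S T ω k j) / (∑ j, M.S0 k j)) A = 0 := fun k =>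
      (Finset.sum_eq_zero_iff.mp hsum0) k (Finset.mem_univ k)
    have hfpos : ∀ k : Fin d, ∀ ω, (∑ j, M.S T ω k j) / (∑ j, M.S0 k j) ≠ 0 := by
      intro k ω h
      rw [div_eq_mul_inv] at h
      rcases mul_eq_zero.mp h with h' | h'
      · have h1 : (1:ℝ≥0∞) ≤ ∑ j, M.S T ω k j :=
          ENNReal.row_sum_one_le (M.exchange_S T hT ω) k
        rw [h'] at h1
        simp at h1
      · exact (hcfin k) (ENNReal.inv_eq_zero.mp h')
    have hQ0 : ∀ k, Q k A = 0 := by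
      intro k
      obtain ⟨B, hAB, hBmeas, hB0⟩ := exists_measurable_superset_of_null (hν0 k)
      rw [withDensity_apply _ hBmeas] at hB0
      have hae : (fun ω => (∑ j, M.S T ω k j) / (∑ j, M.S0 k j))
          =ᵐ[(Q k).restrict B] 0 := (lintegral_eq_zero_iff (hf_meas k)).mp hB0
      have hcompl : {ω | ¬ ((fun ω => (∑ j, M.S T ω k j) / (∑ j, M.S0 k j)) ω = (0 : Ω → ℝ≥0∞) ω)}
          = Set.univ := Set.eq_univ_of_forall fun ω => by
        simpa using hfpos k ω
      have h2 := ae_iff.mp hae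
      rw [hcompl] at h2
      rw [Measure.restrict_apply_univ] at h2
      exact measure_mono_null hAB h2
    rw [Measure.finset_sum_apply]
    exact Finset.sum_eq_zero fun k _ => hQ0 k
end
end

section
/- Suppose Q_1 is a probability measure on (Ω, F(T)) such that the first row S_1 = (S_{1,j})_j of the exchange-matrix process is a Q_1-martingale with real-valued (possibly zero) entries. Define, for each i, the probability measure Q_i by dQ_i/dQ_1 = S_{i,1}(0)·S_{1,i}(T). Then (Q_i)_{i=1}^d is a numéraire-consistent family of probability measures; moreover each Q_i is absolutely continuous with respect to Q_1, and ∑_i Q_i is equivalent to Q_1. -/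
open MeasureTheory Filter Set Function
open scoped ENNReal

noncomputable section

/-! ### Auxiliary lemmas -/

lemma exchange_inv' {d : ℕ} {s : Fin d → Fin d → ℝ≥0∞} (hs : IsExchangeMatrix s)
    {z k : Fin d} (h0 : s z k ≠ 0) (ht : s z k ≠ ∞) : s k z = (s z k)⁻¹ := by
  have hdp : DefinedProd (s k z) (s z k) := ⟨fun h => ht h.2, fun h => h0 h.2⟩
  have h1 : s k z * s z k = 1 := by rw [hs.consistent k z k hdp, hs.diag]
  have := congrArg (· * (s z k)⁻¹) h1
  simpa [mul_assoc, ENNReal.mul_inv_cancel h0 ht] using this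

lemma exchange_key₁ {d : ℕ} {s : Fin d → Fin d → ℝ≥0∞} (hs : IsExchangeMatrix s)
    {z i j : Fin d} (hi : s z i ≠ ∞) (hj : s z j ≠ ∞) :
    s i j * s z i = if 0 < s z i then s z j else 0 := by
  by_cases ha : s z i = 0
  · simp [ha]
  · have hiz := exchange_inv' hs ha hi
    have hinv_ne_top : (s z i)⁻¹ ≠ ∞ := by simpa [ENNReal.inv_eq_top] using ha
    have hdp : DefinedProd (s i z) (s z j) := by
      refine ⟨fun h => hj h.2, fun h => ?_⟩
      rw [hiz] at h; exact hinv_ne_top h.1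
    have hij : s i j = (s z i)⁻¹ * s z j := by rw [← hs.consistent i z j hdp, hiz]
    rw [hij, if_pos (pos_iff_ne_zero.mpr ha), mul_comm ((s z i)⁻¹) (s z j), mul_assoc,
      ENNReal.inv_mul_cancel ha hi, mul_one]

lemma exchange_key₂ {d : ℕ} {s : Fin d → Fin d → ℝ≥0∞} (hs : IsExchangeMatrix s)
    {z i j : Fin d} (hi : s z i ≠ ∞) (hj : s z j ≠ ∞) :
    (if 0 < s j i then s z j else 0) = if 0 < s z i then s z j else 0 := by
  by_cases hb : s z j = 0
  · simp [hb]
  · have hjz := exchange_inv' hs hb hj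
    have hinv_ne_top : (s z j)⁻¹ ≠ ∞ := by simpa [ENNReal.inv_eq_top] using hb
    have hinv_ne_zero : (s z j)⁻¹ ≠ 0 := by simpa [ENNReal.inv_eq_zero] using hj
    have hdp : DefinedProd (s j z) (s z i) := by
      refine ⟨fun h => hi h.2, fun h => ?_⟩
      rw [hjz] at h; exact hinv_ne_top h.1
    have hji : s j i = (s z j)⁻¹ * s z i := by rw [← hs.consistent j z i hdp, hjz]
    have hiff : (0 < s j i) ↔ (0 < s z i) := by
      rw [hji, pos_iff_ne_zero, pos_iff_ne_zero, mul_ne_zero_iff]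
      exact ⟨fun h => h.2, fun h => ⟨hinv_ne_zero, h⟩⟩
    simp only [hiff]

/-- Martingale transfer: integrating an `F t`-measurable nonnegative function against the
time-`T` value of the nonnegative martingale equals integrating against its time-`t` value. -/
lemma mart_transfer {d : ℕ} {Ω : Type*} [mΩ : MeasurableSpace Ω] {T : ℝ}
    (M : MarketModel d Ω T) (Q1 : Measure Ω) [IsProbabilityMeasure Q1] (z : Fin d)
    (hmart : ∀ j, MartingaleOn M.F Q1 (fun t ω => (M.S t ω z j).toReal) T)
    (hfin : ∀ t ∈ Set.Icc (0:ℝ) T, ∀ j, ∀ᵐ ω ∂Q1, M.S t ω z j ≠ ∞)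
    {t : ℝ} (ht : t ∈ Set.Icc (0:ℝ) T) (k : Fin d)
    {f : Ω → ℝ≥0∞} (hf : Measurable[M.F t] f) :
    ∫⁻ ω, f ω * M.S T ω z k ∂Q1 = ∫⁻ ω, f ω * M.S t ω z k ∂Q1 := by
  have hT : T ∈ Set.Icc (0:ℝ) T := ⟨M.T_pos.le, le_rfl⟩
  have hm : M.F t ≤ mΩ := M.F.le t
  have hgT : Measurable fun ω => M.S T ω z k := (M.adapted_S T hT z k).mono (M.F.le T) le_rfl
  have hgt : Measurable fun ω => M.S t ω z k := (M.adapted_S t ht z k).mono hm le_rfl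
  have hset : ∀ u ∈ Set.Icc (0:ℝ) T, ∀ s : Set Ω, MeasurableSet s →
      ∫⁻ ω in s, M.S u ω z k ∂Q1
        = ENNReal.ofReal (∫ ω in s, (M.S u ω z k).toReal ∂Q1) := by
    intro u hu s _
    have hae : (fun ω => M.S u ω z k)
        =ᵐ[Q1.restrict s] fun ω => ENNReal.ofReal ((M.S u ω z k).toReal) :=
      ae_restrict_of_ae ((hfin u hu k).mono fun ω h => (ENNReal.ofReal_toReal h).symm)
    rw [lintegral_congr_ae hae,
      ← ofReal_integral_eq_lintegral_ofReal (((hmart k).1 u hu).2.restrict)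
        (ae_of_all _ fun ω => ENNReal.toReal_nonneg)]
  have key : ∀ s : Set Ω, MeasurableSet[M.F t] s →
      ∫⁻ ω in s, M.S T ω z k ∂Q1 = ∫⁻ ω in s, M.S t ω z k ∂Q1 := by
    intro s hs
    rw [hset T hT s (hm _ hs), hset t ht s (hm _ hs)]
    congr 1
    calc ∫ ω in s, (M.S T ω z k).toReal ∂Q1
        = ∫ ω in s, (Q1[fun ω => (M.S T ω z k).toReal|M.F t]) ω ∂Q1 :=
          (setIntegral_condExp hm ((hmart k).1 T hT).2 hs).symm
      _ = ∫ ω in s, (M.S t ω z k).toReal ∂Q1 :=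
          integral_congr_ae (ae_restrict_of_ae ((hmart k).2 t ht T hT ht.2))
  have htrim : (Q1.withDensity fun ω => M.S T ω z k).trim hm
      = (Q1.withDensity fun ω => M.S t ω z k).trim hm := by
    refine @Measure.ext Ω (M.F t) _ _ fun s hs => ?_
    rw [trim_measurableSet_eq hm hs, trim_measurableSet_eq hm hs,
      withDensity_apply _ (hm _ hs), withDensity_apply _ (hm _ hs), key s hs]
  have hfm : Measurable f := hf.mono hm le_rfl
  calc ∫⁻ ω, f ω * M.S T ω z k ∂Q1
      = ∫⁻ ω, f ω ∂(Q1.withDensity fun ω => M.S T ω z k) := by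
        rw [lintegral_withDensity_eq_lintegral_mul Q1 hgT hfm]
        exact lintegral_congr fun ω => mul_comm _ _
    _ = ∫⁻ ω, f ω ∂((Q1.withDensity fun ω => M.S T ω z k).trim hm) :=
        (lintegral_trim hm hf).symm
    _ = ∫⁻ ω, f ω ∂((Q1.withDensity fun ω => M.S t ω z k).trim hm) := by rw [htrim]
    _ = ∫⁻ ω, f ω ∂(Q1.withDensity fun ω => M.S t ω z k) := lintegral_trim hm hf
    _ = ∫⁻ ω, f ω * M.S t ω z k ∂Q1 := by
        rw [lintegral_withDensity_eq_lintegral_mul Q1 hgt hfm]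
        exact lintegral_congr fun ω => mul_comm _ _

/-- classical setup, cases 1 & 2: if the first row `S_1` is a `Q_1`-martingale
(real-valued, possibly hitting zero), then the measures defined by
`dQ_i/dQ_1 = S_{i,1}(0) S_{1,i}(T)` form a numéraire-consistent family; each `Q_i` is
absolutely continuous with respect to `Q_1`, and `∑ i, Q i` is equivalent to `Q_1`. -/
theorem change_of_numeraire_family {d : ℕ} {Ω : Type*} [MeasurableSpace Ω] {T : ℝ}
    (hd : 0 < d) (M : MarketModel d Ω T) (Q1 : Measure Ω) [IsProbabilityMeasure Q1]
    (hmart : ∀ j, MartingaleOn M.F Q1 (fun t ω => (M.S t ω ⟨0, hd⟩ j).toReal) T)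
    (hfin : ∀ t ∈ Set.Icc (0 : ℝ) T, ∀ j, ∀ᵐ ω ∂Q1, M.S t ω ⟨0, hd⟩ j ≠ ∞)
    (Q : Fin d → Measure Ω)
    (hQdef : ∀ i, Q i = Q1.withDensity fun ω => M.S0 i ⟨0, hd⟩ * M.S T ω ⟨0, hd⟩ i) :
    NumeraireConsistent M Q ∧ (∀ i, Q i ≪ Q1) ∧
      ((∑ i, Q i) ≪ Q1 ∧ Q1 ≪ (∑ i, Q i)) := by
  classical
  set z : Fin d := ⟨0, hd⟩ with hz
  have hT : T ∈ Set.Icc (0:ℝ) T := ⟨M.T_pos.le, le_rfl⟩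
  have h0T : (0:ℝ) ∈ Set.Icc (0:ℝ) T := ⟨le_rfl, M.T_pos.le⟩
  have hne : Nonempty Ω := by
    by_contra h
    have h1 : Q1 Set.univ = 1 := measure_univ
    rw [Set.univ_eq_empty_iff.mpr (not_nonempty_iff.mp h)] at h1
    simp at h1
  obtain ⟨ω0⟩ := hne
  have hSX : IsExchangeMatrix M.S0 := by
    have := M.exchange_S 0 h0T ω0
    simpa [M.init_S ω0] using this
  have hS0fin : ∀ i j, M.S0 i j ≠ ∞ := by
    intro i j
    exact (lt_of_le_of_lt (Finset.single_le_sum (fun k _ => (zero_le : 0 ≤ M.S0 i k))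
      (Finset.mem_univ j)) (M.active_S0 i)).ne
  have hS0dp : ∀ i j : Fin d, DefinedProd (M.S0 i j) (M.S0 j z) :=
    fun i j => ⟨fun h => hS0fin j z h.2, fun h => hS0fin i j h.1⟩
  have hS0mul : ∀ i j : Fin d, M.S0 i j * M.S0 j z = M.S0 i z :=
    fun i j => hSX.consistent i j z (hS0dp i j)
  have hS0unit : ∀ i : Fin d, M.S0 i z * M.S0 z i = 1 := by
    intro i
    have := hSX.consistent i z i ⟨fun h => hS0fin z i h.2, fun h => hS0fin i z h.1⟩
    rw [this, hSX.diag]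
  have hgTm : ∀ k, Measurable fun ω => M.S T ω z k :=
    fun k => (M.adapted_S T hT z k).mono (M.F.le T) le_rfl
  have hdens : ∀ i, Measurable fun ω => M.S0 i z * M.S T ω z i :=
    fun i => measurable_const.mul (hgTm i)
  -- each Q i is a probability measure
  have hprob : ∀ i, IsProbabilityMeasure (Q i) := by
    intro i
    constructor
    rw [hQdef i, withDensity_apply _ MeasurableSet.univ, Measure.restrict_univ,
      lintegral_const_mul _ (hgTm i)]
    have h1 : ∫⁻ ω, M.S T ω z i ∂Q1 = ∫⁻ ω, M.S 0 ω z i ∂Q1 := by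
      have := mart_transfer M Q1 z hmart hfin h0T i (f := fun _ => 1) measurable_const
      simpa using this
    rw [h1]
    have h2 : ∫⁻ ω, M.S 0 ω z i ∂Q1 = M.S0 z i := by
      have : (fun ω => M.S 0 ω z i) = fun _ => M.S0 z i := by
        funext ω; rw [M.init_S ω]
      rw [this, lintegral_const, measure_univ, mul_one]
    rw [h2, hS0unit i]
  have habs : ∀ i, Q i ≪ Q1 := by
    intro i
    rw [hQdef i]
    exact withDensity_absolutelyContinuous _ _
  refine ⟨⟨hprob, ?_⟩, habs, ?_, ?_⟩
  · -- numeraire consistency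
    intro i j t ht A hA
    have hm := M.F.le t
    have hAm : MeasurableSet A := hm _ hA
    have hsijm_t : Measurable[M.F t] fun ω => M.S t ω i j := M.adapted_S t ht i j
    have hsijm : Measurable fun ω => M.S t ω i j := hsijm_t.mono hm le_rfl
    set B : Set Ω := A ∩ {ω | 0 < M.S t ω j i} with hB_def
    have hBm_t : MeasurableSet[M.F t] B :=
      hA.inter (measurableSet_lt measurable_const (M.adapted_S t ht j i))
    have hBm : MeasurableSet B := hm _ hBm_t
    set E : Set Ω := A ∩ {ω | 0 < M.S t ω z i} with hE_def
    have hEm_t : MeasurableSet[M.F t] E :=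
      hA.inter (measurableSet_lt measurable_const (M.adapted_S t ht z i))
    have hEm : MeasurableSet E := hm _ hEm_t
    set L : ℝ≥0∞ := ∫⁻ ω, E.indicator (fun ω => M.S t ω z j) ω ∂Q1 with hL_def
    have hfinae : ∀ᵐ ω ∂Q1, M.S t ω z i ≠ ∞ ∧ M.S t ω z j ≠ ∞ :=
      (hfin t ht i).and (hfin t ht j)
    -- LHS computation
    have hLHS : ∫⁻ ω in A, M.S t ω i j ∂(Q i) = M.S0 i z * L := by
      rw [hQdef i, restrict_withDensity hAm,
        lintegral_withDensity_eq_lintegral_mul _ (hdens i) hsijm]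
      have step1 : ∫⁻ ω in A, (fun ω => M.S0 i z * M.S T ω z i) ω * M.S t ω i j ∂Q1
          = M.S0 i z * ∫⁻ ω in A, M.S t ω i j * M.S T ω z i ∂Q1 := by
        rw [← lintegral_const_mul _ (by exact hsijm.mul (hgTm i))]
        exact lintegral_congr fun ω => by ring
      simp only [Pi.mul_apply] at step1 ⊢
      rw [step1]
      congr 1
      have step2 : ∫⁻ ω in A, M.S t ω i j * M.S T ω z i ∂Q1
          = ∫⁻ ω, A.indicator (fun ω => M.S t ω i j) ω * M.S T ω z i ∂Q1 := by
        rw [← lintegral_indicator hAm _]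
        exact lintegral_congr fun ω => Set.indicator_mul_left A _ _
      rw [step2, mart_transfer M Q1 z hmart hfin ht i (hsijm_t.indicator hA)]
      refine lintegral_congr_ae (hfinae.mono fun ω hω => ?_)
      have hX := M.exchange_S t ht ω
      have hkey := exchange_key₁ hX (z := z) (i := i) (j := j) hω.1 hω.2
      simp only [Set.indicator_apply, hE_def, Set.mem_inter_iff, Set.mem_setOf_eq]
      by_cases hωA : ω ∈ A
      · simp only [hωA, if_true, true_and]
        simpa using hkey
      · simp [hωA]
    -- RHS computation
    have hRHS : Q j B = M.S0 j z * L := by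
      rw [hQdef j, withDensity_apply _ hBm, lintegral_const_mul _ (hgTm j)]
      congr 1
      have step2 : ∫⁻ ω in B, M.S T ω z j ∂Q1
          = ∫⁻ ω, B.indicator (fun _ => (1:ℝ≥0∞)) ω * M.S T ω z j ∂Q1 := by
        rw [← lintegral_indicator hBm _]
        refine lintegral_congr fun ω => ?_
        by_cases hωB : ω ∈ B <;>
          simp [Set.indicator_apply, hωB]
      rw [step2, mart_transfer M Q1 z hmart hfin ht j (measurable_const.indicator hBm_t)]
      refine lintegral_congr_ae (hfinae.mono fun ω hω => ?_)
      have hX := M.exchange_S t ht ω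
      have hkey := exchange_key₂ hX (z := z) (i := i) (j := j) hω.1 hω.2
      simp only [Set.indicator_apply, hE_def, hB_def, Set.mem_inter_iff, Set.mem_setOf_eq]
      by_cases hωA : ω ∈ A
      · simp only [hωA, if_true, true_and, ite_mul, one_mul, zero_mul]
        simpa using hkey
      · simp [hωA]
    rw [hLHS, hRHS, ← mul_assoc, hS0mul i j]
  · -- sum ≪ Q1
    refine Measure.AbsolutelyContinuous.mk fun s hs hs0 => ?_
    have : ∀ i, Q i s = 0 := fun i => habs i hs0
    simp [Measure.finset_sum_apply, this]
  · -- Q1 ≪ sum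
    have hQz : Q z = Q1 := by
      rw [hQdef z]
      have : (fun ω => M.S0 z z * M.S T ω z z) = fun _ => (1:ℝ≥0∞) := by
        funext ω
        rw [(M.exchange_S T hT ω).diag z, hSX.diag z, mul_one]
      rw [this]
      exact withDensity_one
    refine Measure.AbsolutelyContinuous.mk fun s hs hs0 => ?_
    have hle : Q z s ≤ (∑ i, Q i) s := by
      rw [Measure.finset_sum_apply _ _ s]
      exact Finset.single_le_sum (fun k _ => (zero_le : 0 ≤ Q k s)) (Finset.mem_univ z)
    rw [← hQz]
    exact le_antisymm (hs0 ▸ hle) zero_le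
end
end
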